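/- arXiv:2005.08136 — 8 statements merged into one kernel-verified Lean document; each statement's English description precedes it below -/
import Mathlib

section
/- Let E be an exponential random variable with rate 1. Then for every bounded measurable f : (0,∞) → ℝ, E[f(ν←(E))] = ∫_0^∞ f(ν←(γ))·e^{−γ} dγ = ∫_{(0,∞)} f(y)·exp(−ν([y,∞))) ν(dy). -/
open MeasureTheory
open scoped ENNReal NNReal

/-- Let `ν` be an atomless σ-finite Borel measure on `(0,∞)` with infinite
total mass and finite tails, and `ν←` its generalized inverse.  If `E` is a rate-1
exponential random variable then
`E[f(ν←(E))] = ∫_0^∞ f(ν←(γ)) e^{−γ} dγ = ∫_{(0,∞)} f(y) exp(−ν([y,∞))) ν(dy)`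
for every bounded measurable `f`. -/
theorem inverse_levy_first_rate_law
    {Ω : Type*} [MeasurableSpace Ω] (P : Measure Ω) [IsProbabilityMeasure P]
    (ν : Measure ℝ) [SigmaFinite ν]
    (hν_atomless : ∀ x : ℝ, ν {x} = 0)
    (hν_supp : ν (Set.Iic 0) = 0)
    (hν_inf : ν (Set.Ioi 0) = ⊤)
    (hν_tail : ∀ y : ℝ, 0 < y → ν (Set.Ici y) < ⊤)
    (νinv : ℝ → ℝ)
    (hνinv : ∀ x : ℝ, νinv x = sInf {y : ℝ | 0 < y ∧ ν (Set.Ici y) ≤ ENNReal.ofReal x})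
    (E : Ω → ℝ) (hE : Measurable E)
    (hElaw : Measure.map E P = ProbabilityTheory.expMeasure 1)
    (f : ℝ → ℝ) (hf : Measurable f) (C : ℝ) (hfC : ∀ x, |f x| ≤ C) :
    (∫ ω, f (νinv (E ω)) ∂P = ∫ γ in Set.Ioi (0 : ℝ), f (νinv γ) * Real.exp (-γ)) ∧
      (∫ γ in Set.Ioi (0 : ℝ), f (νinv γ) * Real.exp (-γ))
        = ∫ y, f y * Real.exp (-(ν (Set.Ici y)).toReal) ∂ν := by
  classical
  -- notation for the set of which `νinv x` is the infimum
  set S : ℝ → Set ℝ := fun x => {y : ℝ | 0 < y ∧ ν (Set.Ici y) ≤ ENNReal.ofReal x} with hS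
  have hνinv' : ∀ x, νinv x = sInf (S x) := hνinv
  have hGanti : Antitone fun y : ℝ => ν (Set.Ici y) :=
    fun a b hab => measure_mono (Set.Ici_subset_Ici.2 hab)
  -- Ici and Ioi have the same measure
  have hIoiIci : ∀ a : ℝ, ν (Set.Ici a) = ν (Set.Ioi a) := by
    intro a
    refine le_antisymm ?_ (measure_mono Set.Ioi_subset_Ici_self)
    have : Set.Ici a = {a} ∪ Set.Ioi a := by
      ext x; simp [Set.mem_Ici, le_iff_lt_or_eq, eq_comm, or_comm]
    rw [this]
    calc ν ({a} ∪ Set.Ioi a) ≤ ν {a} + ν (Set.Ioi a) := measure_union_le _ _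
      _ = ν (Set.Ioi a) := by rw [hν_atomless, zero_add]
  -- tails tend to zero
  have htail0 : Filter.Tendsto (fun n : ℕ => ν (Set.Ici ((n : ℝ) + 1))) Filter.atTop (nhds 0) := by
    have hInter : ⋂ n : ℕ, Set.Ici ((n : ℝ) + 1) = (∅ : Set ℝ) := by
      ext x
      simp only [Set.mem_iInter, Set.mem_Ici, Set.mem_empty_iff_false, iff_false, not_forall,
        not_le]
      obtain ⟨n, hn⟩ := exists_nat_gt x
      exact ⟨n, by linarith⟩
    have := tendsto_measure_iInter_atTop (μ := ν)
      (s := fun n : ℕ => Set.Ici ((n : ℝ) + 1))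
      (fun n => measurableSet_Ici.nullMeasurableSet)
      (fun n m hnm => Set.Ici_subset_Ici.2
        (by have h' : (n:ℝ) ≤ m := Nat.cast_le.2 hnm; linarith))
      ⟨0, by simpa using (hν_tail 1 one_pos).ne⟩
    rwa [hInter, measure_empty] at this
  -- the measure blows up near 0
  have hblow : ∀ c : ℝ≥0∞, c ≠ ⊤ → ∃ ε : ℝ, 0 < ε ∧ c < ν (Set.Ici ε) := by
    intro c hc
    by_contra h
    push_neg at h
    have hmono : Monotone fun n : ℕ => Set.Ici ((1 : ℝ) / (n + 1)) := by
      intro n m hnm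
      apply Set.Ici_subset_Ici.2
      apply one_div_le_one_div_of_le (by positivity)
      have h' : (n:ℝ) ≤ m := Nat.cast_le.2 hnm
      linarith
    have hunion : ⋃ n : ℕ, Set.Ici ((1 : ℝ) / (n + 1)) = Set.Ioi 0 := by
      ext x
      simp only [Set.mem_iUnion, Set.mem_Ici, Set.mem_Ioi]
      constructor
      · rintro ⟨n, hn⟩; exact lt_of_lt_of_le (by positivity) hn
      · intro hx
        obtain ⟨n, hn⟩ := exists_nat_one_div_lt hx
        exact ⟨n, hn.le⟩
    have hU := Directed.measure_iUnion (μ := ν) (hmono.directed_le)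
    rw [hunion] at hU
    have hle : ν (Set.Ioi 0) ≤ c := by
      rw [hU]; exact iSup_le fun n => h _ (by positivity)
    rw [hν_inf] at hle
    exact hc (top_le_iff.1 hle)
  -- S γ is nonempty for γ > 0
  have hSne : ∀ γ : ℝ, 0 < γ → (S γ).Nonempty := by
    intro γ hγ
    have hpos : (0 : ℝ≥0∞) < ENNReal.ofReal γ := ENNReal.ofReal_pos.2 hγ
    have := htail0.eventually_lt_const hpos
    obtain ⟨n, hn⟩ := this.exists
    exact ⟨(n : ℝ) + 1, by positivity, hn.le⟩
  have hSbdd : ∀ γ : ℝ, BddBelow (S γ) := fun γ => ⟨0, fun y hy => hy.1.le⟩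
  -- positivity of νinv, with a uniform lower bound
  have hpos : ∀ γ : ℝ, 0 < γ → 0 < νinv γ := by
    intro γ hγ
    obtain ⟨ε, hε, hεν⟩ := hblow (ENNReal.ofReal γ) ENNReal.ofReal_ne_top
    have hle : ε ≤ νinv γ := by
      rw [hνinv']
      refine le_csInf (hSne γ hγ) fun y hy => ?_
      by_contra hyε
      push_neg at hyε
      exact absurd (le_trans (hGanti hyε.le) hy.2) (not_le.2 hεν)
    exact lt_of_lt_of_le hε hle
  -- Key identity: ν [νinv γ, ∞) = γ
  have hA : ∀ γ : ℝ, 0 < γ → ν (Set.Ici (νinv γ)) = ENNReal.ofReal γ := by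
    intro γ hγ
    set m := νinv γ with hm
    have hmpos : 0 < m := hpos γ hγ
    have hmInf : m = sInf (S γ) := hνinv' γ
    refine le_antisymm ?_ ?_
    · -- upper bound via right-continuity
      rw [hIoiIci]
      have hunion : ⋃ n : ℕ, Set.Ici (m + 1 / ((n : ℝ) + 1)) = Set.Ioi m := by
        ext x
        simp only [Set.mem_iUnion, Set.mem_Ici, Set.mem_Ioi]
        constructor
        · rintro ⟨n, hn⟩
          have h0 : (0:ℝ) < 1 / ((n:ℝ) + 1) := by positivity
          linarith
        · intro hx
          obtain ⟨n, hn⟩ := exists_nat_one_div_lt (sub_pos.2 hx)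
          exact ⟨n, by linarith⟩
      have hmono : Monotone fun n : ℕ => Set.Ici (m + 1 / ((n : ℝ) + 1)) := by
        intro n k hnk
        apply Set.Ici_subset_Ici.2
        have : (1 : ℝ) / (k + 1) ≤ 1 / (n + 1) := by
          apply one_div_le_one_div_of_le (by positivity)
          have h' : (n:ℝ) ≤ k := Nat.cast_le.2 hnk
          linarith
        linarith
      rw [← hunion, Directed.measure_iUnion hmono.directed_le]
      refine iSup_le fun n => ?_
      have hlt : sInf (S γ) < m + 1 / ((n : ℝ) + 1) := by
        rw [← hmInf]; have : (0:ℝ) < 1 / ((n : ℝ) + 1) := by positivity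
        linarith
      obtain ⟨y, hyS, hy⟩ := exists_lt_of_csInf_lt (hSne γ hγ) hlt
      exact le_trans (hGanti hy.le) hyS.2
    · -- lower bound via left-continuity
      have hseq : Filter.Tendsto (fun n : ℕ => m - m / ((n : ℝ) + 2)) Filter.atTop (nhds m) := by
        have h0 : Filter.Tendsto (fun n : ℕ => m / ((n : ℝ) + 2)) Filter.atTop (nhds 0) := by
          apply Filter.Tendsto.div_atTop tendsto_const_nhds
          exact Filter.tendsto_atTop_add_const_right _ 2 tendsto_natCast_atTop_atTop
        simpa using Filter.Tendsto.sub tendsto_const_nhds h0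
      have hylt : ∀ n : ℕ, m - m / ((n : ℝ) + 2) < m := by
        intro n
        have : 0 < m / ((n : ℝ) + 2) := by positivity
        linarith
      have hypos : ∀ n : ℕ, 0 < m - m / ((n : ℝ) + 2) := by
        intro n
        rw [sub_pos]
        rw [div_lt_iff₀ (by positivity)]
        have h0 : (0:ℝ) ≤ (n:ℝ) := Nat.cast_nonneg n
        nlinarith
      have hmonoy : Monotone fun n : ℕ => m - m / ((n : ℝ) + 2) := by
        intro n k hnk
        have : m / ((k : ℝ) + 2) ≤ m / ((n : ℝ) + 2) := by
          apply div_le_div_of_nonneg_left hmpos.le (by positivity)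
          have h' : (n:ℝ) ≤ k := Nat.cast_le.2 hnk
          linarith
        simp only [sub_le_sub_iff_left]
        linarith
      have hInter : ⋂ n : ℕ, Set.Ici (m - m / ((n : ℝ) + 2)) = Set.Ici m := by
        ext x
        simp only [Set.mem_iInter, Set.mem_Ici]
        constructor
        · intro h
          exact le_of_tendsto' hseq h
        · intro h n
          linarith [(hylt n).le, h]
      have htend := tendsto_measure_iInter_atTop (μ := ν)
        (s := fun n : ℕ => Set.Ici (m - m / ((n : ℝ) + 2)))
        (fun n => measurableSet_Ici.nullMeasurableSet)
        (fun n k hnk => Set.Ici_subset_Ici.2 (hmonoy hnk))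
        ⟨0, (hν_tail _ (hypos 0)).ne⟩
      rw [hInter] at htend
      refine ge_of_tendsto' htend fun n => ?_
      -- each m - m/(n+2) is not in S γ
      have hnotS : (m - m / ((n : ℝ) + 2)) ∉ S γ := by
        intro hmem
        have := csInf_le (hSbdd γ) hmem
        rw [← hmInf] at this
        exact absurd this (not_le.2 (hylt n))
      have : ¬ ν (Set.Ici (m - m / ((n : ℝ) + 2))) ≤ ENNReal.ofReal γ := by
        intro hle
        exact hnotS ⟨hypos n, hle⟩
      exact (not_le.1 this).le
  -- Key comparison: b < νinv γ ↔ ofReal γ < ν [b, ∞)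
  have hB : ∀ γ b : ℝ, 0 < γ → 0 < b → (b < νinv γ ↔ ENNReal.ofReal γ < ν (Set.Ici b)) := by
    intro γ b hγ hb
    constructor
    · intro hlt
      have hbnot : b ∉ S γ := by
        intro hmem
        have := csInf_le (hSbdd γ) hmem
        rw [← hνinv'] at this
        exact absurd this (not_le.2 hlt)
      have : ¬ ν (Set.Ici b) ≤ ENNReal.ofReal γ := fun hle => hbnot ⟨hb, hle⟩
      exact not_le.1 this
    · intro hlt
      by_contra h
      push_neg at h
      have hmm : ν (Set.Ici b) ≤ ν (Set.Ici (νinv γ)) :=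
        measure_mono (Set.Ici_subset_Ici.2 h)
      rw [hA γ hγ] at hmm
      exact absurd (lt_of_lt_of_le hlt hmm) (lt_irrefl _)
  -- the preimage sets
  have hpre : ∀ b : ℝ, 0 < b →
      {γ : ℝ | 0 < γ ∧ b < νinv γ} = Set.Ioo 0 ((ν (Set.Ici b)).toReal) := by
    intro b hb
    ext γ
    simp only [Set.mem_setOf_eq, Set.mem_Ioo]
    constructor
    · rintro ⟨hγ, hlt⟩
      refine ⟨hγ, ?_⟩
      rw [hB γ b hγ hb] at hlt
      exact (ENNReal.ofReal_lt_iff_lt_toReal hγ.le (hν_tail b hb).ne).1 hlt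
    · rintro ⟨hγ, hlt⟩
      refine ⟨hγ, ?_⟩
      rw [hB γ b hγ hb]
      exact (ENNReal.ofReal_lt_iff_lt_toReal hγ.le (hν_tail b hb).ne).2 hlt
  -- measurability of νinv
  have hmset : ∀ a : ℝ, MeasurableSet {γ : ℝ | 0 < γ ∧ a < νinv γ} := by
    intro a
    rcases le_or_gt a 0 with ha | ha
    · have : {γ : ℝ | 0 < γ ∧ a < νinv γ} = Set.Ioi 0 := by
        ext γ
        simp only [Set.mem_setOf_eq, Set.mem_Ioi, and_iff_left_iff_imp]
        intro hγ
        exact lt_of_le_of_lt ha (hpos γ hγ)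
      rw [this]; exact measurableSet_Ioi
    · rw [hpre a ha]; exact measurableSet_Ioo
  have hconst : ∀ γ : ℝ, γ ≤ 0 → νinv γ = νinv 0 := by
    intro γ hγ
    rw [hνinv', hνinv']
    have : ENNReal.ofReal γ = ENNReal.ofReal 0 := by
      rw [ENNReal.ofReal_of_nonpos hγ, ENNReal.ofReal_zero]
    simp only [hS, this]
  have hm : Measurable νinv := by
    apply measurable_of_Iic
    intro a
    have hsplit : νinv ⁻¹' Set.Iic a =
        (Set.Ioi 0 \ {γ : ℝ | 0 < γ ∧ a < νinv γ}) ∪ (Set.Iic 0 ∩ νinv ⁻¹' Set.Iic a) := by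
      ext γ
      simp only [Set.mem_preimage, Set.mem_Iic, Set.mem_union, Set.mem_diff, Set.mem_Ioi,
        Set.mem_inter_iff, Set.mem_setOf_eq]
      constructor
      · intro h
        rcases lt_or_ge 0 γ with hγ | hγ
        · exact Or.inl ⟨hγ, fun hc => absurd h (not_le.2 hc.2)⟩
        · exact Or.inr ⟨hγ, h⟩
      · rintro (⟨hγ, hc⟩ | ⟨_, h⟩)
        · exact le_of_not_gt fun hlt => hc ⟨hγ, hlt⟩
        · exact h
    rw [hsplit]
    refine MeasurableSet.union (measurableSet_Ioi.diff (hmset a)) ?_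
    by_cases h : νinv 0 ≤ a
    · have : Set.Iic (0:ℝ) ∩ νinv ⁻¹' Set.Iic a = Set.Iic 0 := by
        ext γ
        simp only [Set.mem_inter_iff, Set.mem_Iic, Set.mem_preimage, and_iff_left_iff_imp]
        intro hγ
        rw [hconst γ hγ]; exact h
      rw [this]; exact measurableSet_Iic
    · have : Set.Iic (0:ℝ) ∩ νinv ⁻¹' Set.Iic a = ∅ := by
        ext γ
        simp only [Set.mem_inter_iff, Set.mem_Iic, Set.mem_preimage, Set.mem_empty_iff_false,
          iff_false, not_and]
        intro hγ hle
        rw [hconst γ hγ] at hle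
        exact h hle
      rw [this]; exact MeasurableSet.empty
  -- the pushforward of Lebesgue measure on (0,∞) under νinv is ν
  set μ := (volume.restrict (Set.Ioi (0:ℝ))).map νinv with hμdef
  have hmapIoi : ∀ b : ℝ, 0 < b → μ (Set.Ioi b) = ν (Set.Ici b) := by
    intro b hb
    rw [hμdef, Measure.map_apply hm measurableSet_Ioi,
      Measure.restrict_apply (hm measurableSet_Ioi)]
    have hset : νinv ⁻¹' Set.Ioi b ∩ Set.Ioi 0 = Set.Ioo 0 ((ν (Set.Ici b)).toReal) := by
      rw [← hpre b hb]
      ext γ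
      simp only [Set.mem_inter_iff, Set.mem_preimage, Set.mem_Ioi, Set.mem_setOf_eq]
      tauto
    rw [hset, Real.volume_Ioo, sub_zero, ENNReal.ofReal_toReal (hν_tail b hb).ne]
  have hμIic : ∀ b : ℝ, b ≤ 0 → μ (Set.Iic b) = 0 := by
    intro b hb
    rw [hμdef, Measure.map_apply hm measurableSet_Iic,
      Measure.restrict_apply (hm measurableSet_Iic)]
    have : νinv ⁻¹' Set.Iic b ∩ Set.Ioi 0 = ∅ := by
      ext γ
      simp only [Set.mem_inter_iff, Set.mem_preimage, Set.mem_Iic, Set.mem_Ioi,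
        Set.mem_empty_iff_false, iff_false, not_and]
      intro hle hγ
      exact absurd hle (not_le.2 (lt_of_le_of_lt hb (hpos γ hγ)))
    rw [this, measure_empty]
  have hμν : μ = ν := by
    set Cs : Set (Set ℝ) :=
      {s | ∃ b : ℝ, b ≤ 0 ∧ s = Set.Iic b} ∪
        {s | ∃ a b : ℝ, 0 < a ∧ a ≤ b ∧ s = Set.Ioc a b} with hCs
    have h_eq : ∀ s ∈ Cs, μ s = ν s := by
      rintro s (⟨b, hb, rfl⟩ | ⟨a, b, ha, hab, rfl⟩)
      · rw [hμIic b hb]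
        exact (le_antisymm (le_trans (measure_mono (Set.Iic_subset_Iic.2 hb))
          (le_of_eq hν_supp)) zero_le).symm
      · have hIoc : Set.Ioc a b = Set.Ioi a \ Set.Ioi b := (Set.Ioi_diff_Ioi).symm
        have hbpos : 0 < b := lt_of_lt_of_le ha hab
        rw [hIoc,
          measure_diff (Set.Ioi_subset_Ioi hab) measurableSet_Ioi.nullMeasurableSet
            (by rw [hmapIoi b hbpos]; exact (hν_tail b hbpos).ne),
          measure_diff (Set.Ioi_subset_Ioi hab) measurableSet_Ioi.nullMeasurableSet
            (by rw [← hIoiIci b]; exact (hν_tail b hbpos).ne),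
          hmapIoi a ha, hmapIoi b hbpos, hIoiIci a, hIoiIci b]
    have hpi : IsPiSystem Cs := by
      rintro s (⟨b, hb, rfl⟩ | ⟨a, b, ha, hab, rfl⟩) t (⟨b', hb', rfl⟩ | ⟨a', b', ha', hab', rfl⟩)
        hst
      · exact Or.inl ⟨min b b', le_trans (min_le_left _ _) hb, Set.Iic_inter_Iic⟩
      · exfalso
        obtain ⟨x, hx1, hx2⟩ := hst
        exact absurd (lt_of_lt_of_le (lt_of_lt_of_le ha' hx2.1.le) (le_trans hx1 hb))
          (lt_irrefl 0)
      · exfalso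
        obtain ⟨x, hx1, hx2⟩ := hst
        exact absurd (lt_of_lt_of_le (lt_of_lt_of_le ha hx1.1.le) (le_trans hx2 hb'))
          (lt_irrefl 0)
      · refine Or.inr ⟨max a a', min b b', lt_max_of_lt_left ha, ?_, Set.Ioc_inter_Ioc⟩
        obtain ⟨x, hx⟩ := hst
        rw [Set.Ioc_inter_Ioc] at hx
        exact le_of_lt (lt_of_lt_of_le hx.1 hx.2)
    have hgen : (inferInstance : MeasurableSpace ℝ) = MeasurableSpace.generateFrom Cs := by
      refine le_antisymm ?_ (MeasurableSpace.generateFrom_le ?_)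
      · rw [(inferInstance : BorelSpace ℝ).measurable_eq, borel_eq_generateFrom_Iic ℝ]
        refine MeasurableSpace.generateFrom_le ?_
        rintro s ⟨b, rfl⟩
        rcases le_or_gt b 0 with hb | hb
        · exact MeasurableSpace.measurableSet_generateFrom (Or.inl ⟨b, hb, rfl⟩)
        · have hdecomp : Set.Iic b = Set.Iic 0 ∪ ⋃ n : ℕ, Set.Ioc ((1:ℝ) / (n + 1)) b := by
            ext x
            simp only [Set.mem_union, Set.mem_Iic, Set.mem_iUnion, Set.mem_Ioc]
            constructor
            · intro hx
              rcases le_or_gt x 0 with hx0 | hx0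
              · exact Or.inl hx0
              · obtain ⟨n, hn⟩ := exists_nat_one_div_lt hx0
                exact Or.inr ⟨n, hn, hx⟩
            · rintro (hx | ⟨n, hn1, hn2⟩)
              · linarith
              · exact hn2
          rw [hdecomp]
          refine MeasurableSet.union
            (MeasurableSpace.measurableSet_generateFrom (Or.inl ⟨0, le_refl _, rfl⟩)) ?_
          refine MeasurableSet.iUnion fun n => ?_
          rcases le_or_gt ((1:ℝ) / (n + 1)) b with h | h
          · exact MeasurableSpace.measurableSet_generateFrom
              (Or.inr ⟨1 / (n + 1), b, by positivity, h, rfl⟩)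
          · rw [Set.Ioc_eq_empty (not_lt.2 h.le)]
            exact @MeasurableSet.empty ℝ (MeasurableSpace.generateFrom Cs)
      · rintro s (⟨b, hb, rfl⟩ | ⟨a, b, ha, hab, rfl⟩)
        · exact measurableSet_Iic
        · exact measurableSet_Ioc
    set B : ℕ → Set ℝ := fun n => if n = 0 then Set.Iic 0 else Set.Ioc ((1:ℝ) / (n + 1)) n
      with hBdef
    have hBmem : ∀ n, B n ∈ Cs := by
      intro n
      rcases Nat.eq_zero_or_pos n with h | h
      · simp only [hBdef]
        rw [if_pos h]
        exact Or.inl ⟨0, le_refl _, rfl⟩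
      · simp only [hBdef]
        rw [if_neg (Nat.pos_iff_ne_zero.1 h)]
        refine Or.inr ⟨1 / (n + 1), n, by positivity, ?_, rfl⟩
        have hn1 : (1:ℝ) ≤ n := by exact_mod_cast h
        calc (1:ℝ) / (n + 1) ≤ 1 := by
              rw [div_le_one (by positivity)]; linarith
          _ ≤ n := hn1
    have hBcover : ⋃ n, B n = Set.univ := by
      ext x
      simp only [Set.mem_iUnion, Set.mem_univ, iff_true]
      rcases le_or_gt x 0 with hx | hx
      · exact ⟨0, by simp [hBdef, hx]⟩
      · obtain ⟨k, hk⟩ := exists_nat_gt x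
        obtain ⟨j, hj⟩ := exists_nat_one_div_lt hx
        refine ⟨max (k + 1) (j + 1), ?_⟩
        have hne : max (k + 1) (j + 1) ≠ 0 :=
          Nat.pos_iff_ne_zero.1 (lt_of_lt_of_le (Nat.succ_pos k) (le_max_left _ _))
        simp only [hBdef]
        rw [if_neg hne, Set.mem_Ioc]
        have hjm : ((j:ℝ) + 1) ≤ ((max (k + 1) (j + 1) : ℕ) : ℝ) := by
          exact_mod_cast (le_max_right (k + 1) (j + 1))
        have hkm : ((k:ℝ)) ≤ ((max (k + 1) (j + 1) : ℕ) : ℝ) := by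
          exact_mod_cast le_trans (Nat.le_succ k) (le_max_left (k + 1) (j + 1))
        constructor
        · have h1 : (1:ℝ) / (((max (k + 1) (j + 1) : ℕ) : ℝ) + 1) ≤ 1 / ((j:ℝ) + 1) := by
            apply one_div_le_one_div_of_le (by positivity)
            linarith
          exact lt_of_le_of_lt h1 hj
        · exact le_trans hk.le hkm
    have hBfin : ∀ n, μ (B n) ≠ ⊤ := by
      intro n
      rcases Nat.eq_zero_or_pos n with h | h
      · simp only [hBdef]
        rw [if_pos h, hμIic 0 (le_refl _)]
        exact ENNReal.zero_ne_top
      · simp only [hBdef]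
        rw [if_neg (Nat.pos_iff_ne_zero.1 h)]
        refine ne_top_of_le_ne_top ?_ (measure_mono Set.Ioc_subset_Ioi_self)
        rw [hmapIoi _ (by positivity : (0:ℝ) < 1 / (n + 1))]
        exact (hν_tail _ (by positivity)).ne
    exact MeasureTheory.Measure.ext_of_generateFrom_of_iUnion Cs B hgen hpi hBcover hBmem hBfin h_eq
  -- the density integrand
  set g : ℝ → ℝ := fun y => f y * Real.exp (-(ν (Set.Ici y)).toReal) with hgdef
  have hGmeas : Measurable fun y : ℝ => (ν (Set.Ici y)).toReal :=
    ENNReal.measurable_toReal.comp hGanti.measurable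
  have hg : Measurable g := hf.mul (Real.measurable_exp.comp hGmeas.neg)
  -- second equality
  have h2 : (∫ γ in Set.Ioi (0:ℝ), f (νinv γ) * Real.exp (-γ)) =
      ∫ y, f y * Real.exp (-(ν (Set.Ici y)).toReal) ∂ν := by
    have step1 : (∫ γ in Set.Ioi (0:ℝ), f (νinv γ) * Real.exp (-γ)) =
        ∫ γ in Set.Ioi (0:ℝ), g (νinv γ) := by
      refine setIntegral_congr_fun measurableSet_Ioi fun γ hγ => ?_
      have hγ' : (0:ℝ) < γ := hγ
      rw [hgdef]
      simp only
      rw [hA γ hγ', ENNReal.toReal_ofReal hγ'.le]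
    have step2 : (∫ γ in Set.Ioi (0:ℝ), g (νinv γ)) = ∫ y, g y ∂ν := by
      rw [← hμν, hμdef]
      exact (integral_map hm.aemeasurable hg.aestronglyMeasurable).symm
    rw [step1, step2]
  -- first equality
  have h1 : ∫ ω, f (νinv (E ω)) ∂P = ∫ γ in Set.Ioi (0:ℝ), f (νinv γ) * Real.exp (-γ) := by
    have hfc : Measurable fun γ : ℝ => f (νinv γ) := hf.comp hm
    have hmap : ∫ ω, f (νinv (E ω)) ∂P = ∫ x, f (νinv x) ∂(Measure.map E P) :=
      (integral_map hE.aemeasurable hfc.aestronglyMeasurable).symm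
    rw [hmap, hElaw]
    have hpdf : ∀ x : ℝ, ProbabilityTheory.gammaPDFReal 1 1 x
        = if 0 ≤ x then Real.exp (-x) else 0 := by
      intro x
      unfold ProbabilityTheory.gammaPDFReal
      simp [Real.Gamma_one]
    have hexp : ProbabilityTheory.expMeasure 1
        = volume.withDensity fun x => ((ProbabilityTheory.gammaPDFReal 1 1 x).toNNReal : ℝ≥0∞) :=
      rfl
    calc ∫ x, f (νinv x) ∂(ProbabilityTheory.expMeasure 1)
        = ∫ x, (ProbabilityTheory.gammaPDFReal 1 1 x).toNNReal • f (νinv x) := by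
          rw [hexp]
          exact integral_withDensity_eq_integral_smul
            ((ProbabilityTheory.measurable_gammaPDFReal 1 1).real_toNNReal) _
      _ = ∫ x, (Set.Ici (0:ℝ)).indicator (fun x => Real.exp (-x) * f (νinv x)) x := by
          congr 1
          funext x
          rcases le_or_gt 0 x with hx | hx
          · rw [Set.indicator_of_mem (Set.mem_Ici.2 hx), NNReal.smul_def, hpdf x, if_pos hx,
              Real.coe_toNNReal _ (Real.exp_pos _).le, smul_eq_mul]
          · rw [Set.indicator_of_notMem
                (show x ∉ Set.Ici (0:ℝ) from by simpa using not_le.2 hx),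
              NNReal.smul_def, hpdf x, if_neg (not_le.2 hx)]
            simp
      _ = ∫ x in Set.Ici (0:ℝ), Real.exp (-x) * f (νinv x) := integral_indicator measurableSet_Ici
      _ = ∫ x in Set.Ioi (0:ℝ), Real.exp (-x) * f (νinv x) := integral_Ici_eq_integral_Ioi
      _ = ∫ γ in Set.Ioi (0:ℝ), f (νinv γ) * Real.exp (-γ) := by
          refine setIntegral_congr_fun measurableSet_Ioi fun γ _ => mul_comm _ _
  exact ⟨h1, h2⟩
end

section
/- For every g > 0 and every bounded measurable f : (0,∞) → ℝ, ∫_0^∞ f(ν←(g + γ))·e^{−γ} dγ = ∫_{(0, ν←(g))} f(y)·exp(−ν([y, ν←(g)))) ν(dy). -/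
open MeasureTheory Set

namespace InvLevy8

variable {ν : Measure ℝ}

/-- The set whose infimum is the generalized inverse. -/
def S (ν : Measure ℝ) (x : ℝ) : Set ℝ := {y : ℝ | 0 < y ∧ ν (Set.Ici y) ≤ ENNReal.ofReal x}

lemma S_nonempty (hν_tail : ∀ y : ℝ, 0 < y → ν (Set.Ici y) < ⊤)
    {x : ℝ} (hx : 0 < x) : (S ν x).Nonempty := by
  have hanti : Antitone (fun n : ℕ => Set.Ici ((n : ℝ) + 1)) := by
    intro m n hmn
    exact Set.Ici_subset_Ici.2 (by exact_mod_cast add_le_add_left (Nat.cast_le.2 hmn) 1)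
  have hinter : (⋂ n : ℕ, Set.Ici ((n : ℝ) + 1)) = ∅ := by
    ext z
    simp only [Set.mem_iInter, Set.mem_Ici, Set.mem_empty_iff_false, iff_false, not_forall, not_le]
    obtain ⟨n, hn⟩ := exists_nat_gt z
    exact ⟨n, by linarith⟩
  have h0 : (⨅ n : ℕ, ν (Set.Ici ((n : ℝ) + 1))) = 0 := by
    rw [← hanti.measure_iInter (fun n => (measurableSet_Ici).nullMeasurableSet)
      ⟨0, (hν_tail _ (by norm_num)).ne⟩, hinter, measure_empty]
  have : (⨅ n : ℕ, ν (Set.Ici ((n : ℝ) + 1))) < ENNReal.ofReal x := by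
    rw [h0]; exact ENNReal.ofReal_pos.2 hx
  obtain ⟨n, hn⟩ := iInf_lt_iff.1 this
  exact ⟨(n : ℝ) + 1, by positivity, hn.le⟩

lemma exists_lb (hν_inf : ν (Set.Ioi 0) = ⊤) (x : ℝ) :
    ∃ y0 : ℝ, 0 < y0 ∧ ∀ z ∈ S ν x, y0 ≤ z := by
  have hmono : Monotone (fun n : ℕ => Set.Ici (1 / ((n : ℝ) + 1))) := by
    intro m n hmn
    refine Set.Ici_subset_Ici.2 ?_
    apply one_div_le_one_div_of_le (by positivity)
    exact add_le_add_left (Nat.cast_le.2 hmn) 1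
  have hunion : (⋃ n : ℕ, Set.Ici (1 / ((n : ℝ) + 1))) = Set.Ioi 0 := by
    ext z
    simp only [Set.mem_iUnion, Set.mem_Ici, Set.mem_Ioi]
    constructor
    · rintro ⟨n, hn⟩
      exact lt_of_lt_of_le (by positivity) hn
    · intro hz
      obtain ⟨n, hn⟩ := exists_nat_one_div_lt hz
      exact ⟨n, hn.le⟩
  have htop : (⨆ n : ℕ, ν (Set.Ici (1 / ((n : ℝ) + 1)))) = ⊤ := by
    rw [← hmono.measure_iUnion, hunion, hν_inf]
  have : ENNReal.ofReal x < ⨆ n : ℕ, ν (Set.Ici (1 / ((n : ℝ) + 1))) := by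
    rw [htop]; exact ENNReal.ofReal_lt_top.trans_le le_rfl
  obtain ⟨n, hn⟩ := lt_iSup_iff.1 this
  refine ⟨1 / ((n : ℝ) + 1), by positivity, fun z hz => ?_⟩
  by_contra hlt
  push_neg at hlt
  have : ν (Set.Ici (1 / ((n : ℝ) + 1))) ≤ ν (Set.Ici z) :=
    measure_mono (Set.Ici_subset_Ici.2 hlt.le)
  exact absurd (this.trans hz.2) (not_le.2 hn)


lemma key0 (hν_inf : ν (Set.Ioi 0) = ⊤) (hν_tail : ∀ y : ℝ, 0 < y → ν (Set.Ici y) < ⊤)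
    {x : ℝ} (hx : 0 < x) : 0 < sInf (S ν x) := by
  obtain ⟨y0, hy0, hlb⟩ := exists_lb hν_inf x
  exact lt_of_lt_of_le hy0 (le_csInf (S_nonempty hν_tail hx) hlb)

lemma S_bddBelow (x : ℝ) : BddBelow (S ν x) := ⟨0, fun z hz => hz.1.le⟩

lemma key1 (hν_atomless : ∀ x : ℝ, ν {x} = 0) (hν_inf : ν (Set.Ioi 0) = ⊤)
    (hν_tail : ∀ y : ℝ, 0 < y → ν (Set.Ici y) < ⊤)
    {x : ℝ} (hx : 0 < x) : ν (Set.Ici (sInf (S ν x))) = ENNReal.ofReal x := by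
  set c := sInf (S ν x) with hc
  have hne := S_nonempty (ν := ν) hν_tail hx
  have hcpos : 0 < c := key0 hν_inf hν_tail hx
  -- upper bound
  have hupper : ν (Set.Ici c) ≤ ENNReal.ofReal x := by
    have hIoi : ν (Set.Ioi c) ≤ ENNReal.ofReal x := by
      have hmono : Monotone (fun n : ℕ => Set.Ici (c + 1 / ((n : ℝ) + 1))) := by
        intro m n hmn
        refine Set.Ici_subset_Ici.2 ?_
        have : 1 / ((n : ℝ) + 1) ≤ 1 / ((m : ℝ) + 1) := by
          apply one_div_le_one_div_of_le (by positivity)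
          exact add_le_add_left (Nat.cast_le.2 hmn) 1
        linarith
      have hunion : (⋃ n : ℕ, Set.Ici (c + 1 / ((n : ℝ) + 1))) = Set.Ioi c := by
        ext z
        simp only [Set.mem_iUnion, Set.mem_Ici, Set.mem_Ioi]
        constructor
        · rintro ⟨n, hn⟩
          have : (0:ℝ) < 1 / ((n : ℝ) + 1) := by positivity
          linarith
        · intro hz
          obtain ⟨n, hn⟩ := exists_nat_one_div_lt (sub_pos.2 hz)
          exact ⟨n, by linarith⟩
      rw [← hunion, hmono.measure_iUnion]
      refine iSup_le fun n => ?_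
      have hlt : c < c + 1 / ((n : ℝ) + 1) := by
        have : (0:ℝ) < 1 / ((n : ℝ) + 1) := by positivity
        linarith
      obtain ⟨z, hz, hzlt⟩ := exists_lt_of_csInf_lt hne hlt
      exact (measure_mono (Set.Ici_subset_Ici.2 hzlt.le)).trans hz.2
    calc ν (Set.Ici c) ≤ ν ({c} ∪ Set.Ioi c) := measure_mono (by
          intro z hz
          rcases eq_or_lt_of_le (Set.mem_Ici.1 hz) with h | h
          · exact Or.inl h.symm
          · exact Or.inr h)
      _ ≤ ν {c} + ν (Set.Ioi c) := measure_union_le _ _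
      _ = ν (Set.Ioi c) := by rw [hν_atomless, zero_add]
      _ ≤ ENNReal.ofReal x := hIoi
  -- lower bound
  have hlower : ENNReal.ofReal x ≤ ν (Set.Ici c) := by
    have hanti : Antitone (fun n : ℕ => Set.Ici (c - c / ((n : ℝ) + 2))) := by
      intro m n hmn
      refine Set.Ici_subset_Ici.2 ?_
      have : c / ((n : ℝ) + 2) ≤ c / ((m : ℝ) + 2) := by
        apply div_le_div_of_nonneg_left hcpos.le (by positivity)
        exact add_le_add_left (Nat.cast_le.2 hmn) 2
      linarith
    have hinter : (⋂ n : ℕ, Set.Ici (c - c / ((n : ℝ) + 2))) = Set.Ici c := by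
      ext z
      simp only [Set.mem_iInter, Set.mem_Ici]
      constructor
      · intro h
        by_contra hzc
        push_neg at hzc
        obtain ⟨n, hn⟩ := exists_nat_gt (c / (c - z))
        have hn2 : c / (c - z) < (n : ℝ) + 2 := by
          have : (0:ℝ) ≤ n := Nat.cast_nonneg n
          linarith
        have hczpos : (0:ℝ) < c - z := by linarith
        have : c / ((n : ℝ) + 2) < c - z := by
          rw [div_lt_iff₀ (by positivity)]
          rw [div_lt_iff₀ hczpos] at hn
          have hn2' : c < ((n : ℝ) + 2) * (c - z) := by nlinarith
          linarith [hn2']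
        have := h n
        linarith
      · intro h n
        have h1 : 0 ≤ c / ((n : ℝ) + 2) := by positivity
        linarith
    have hfin : ∃ n : ℕ, ν (Set.Ici (c - c / ((n : ℝ) + 2))) ≠ ⊤ := by
      refine ⟨0, (hν_tail _ ?_).ne⟩
      have : c / ((0 : ℝ) + 2) < c := by
        rw [div_lt_iff₀ (by norm_num)]
        linarith
      norm_num at this ⊢
      linarith
    rw [← hinter, hanti.measure_iInter (fun n => measurableSet_Ici.nullMeasurableSet) hfin]
    refine le_iInf fun n => ?_
    have hyn_pos : 0 < c - c / ((n : ℝ) + 2) := by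
      have h1 : c / ((n : ℝ) + 2) < c := by
        rw [div_lt_iff₀ (by positivity)]
        nlinarith [Nat.cast_nonneg (α := ℝ) n]
      linarith
    have hyn_lt : c - c / ((n : ℝ) + 2) < c := by
      have : (0:ℝ) < c / ((n : ℝ) + 2) := by positivity
      linarith
    by_contra hcon
    push_neg at hcon
    have : c - c / ((n : ℝ) + 2) ∈ S ν x := ⟨hyn_pos, hcon.le⟩
    exact absurd (csInf_le (S_bddBelow x) this) (not_le.2 hyn_lt)
  exact le_antisymm hupper hlower

lemma keyChar (hν_atomless : ∀ x : ℝ, ν {x} = 0) (hν_inf : ν (Set.Ioi 0) = ⊤)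
    (hν_tail : ∀ y : ℝ, 0 < y → ν (Set.Ici y) < ⊤)
    {x y : ℝ} (hx : 0 < x) (hy : 0 < y) :
    ν (Set.Ici y) ≤ ENNReal.ofReal x ↔ sInf (S ν x) ≤ y := by
  constructor
  · intro h
    exact csInf_le (S_bddBelow x) ⟨hy, h⟩
  · intro h
    exact (measure_mono (Set.Ici_subset_Ici.2 h)).trans
      (key1 hν_atomless hν_inf hν_tail hx).le

lemma keyAnti (hν_atomless : ∀ x : ℝ, ν {x} = 0) (hν_inf : ν (Set.Ioi 0) = ⊤)
    (hν_tail : ∀ y : ℝ, 0 < y → ν (Set.Ici y) < ⊤)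
    {x x' : ℝ} (hx : 0 < x) (hxx' : x ≤ x') : sInf (S ν x') ≤ sInf (S ν x) := by
  have hx' : 0 < x' := lt_of_lt_of_le hx hxx'
  refine (keyChar hν_atomless hν_inf hν_tail hx' (key0 hν_inf hν_tail hx)).1 ?_
  exact (key1 hν_atomless hν_inf hν_tail hx).le.trans (ENNReal.ofReal_le_ofReal hxx')

end InvLevy8

open InvLevy8 in
/-- Inductive step for the inverse Lévy representation: for every `g > 0`
and every bounded measurable `f`,
`∫_0^∞ f(ν←(g+γ)) e^{−γ} dγ = ∫_{(0,ν←(g))} f(y) exp(−ν([y, ν←(g)))) ν(dy)`. -/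
theorem inverse_levy_inductive_step
    (ν : Measure ℝ) [SigmaFinite ν]
    (hν_atomless : ∀ x : ℝ, ν {x} = 0)
    (hν_supp : ν (Set.Iic 0) = 0)
    (hν_inf : ν (Set.Ioi 0) = ⊤)
    (hν_tail : ∀ y : ℝ, 0 < y → ν (Set.Ici y) < ⊤)
    (νinv : ℝ → ℝ)
    (hνinv : ∀ x : ℝ, νinv x = sInf {y : ℝ | 0 < y ∧ ν (Set.Ici y) ≤ ENNReal.ofReal x})
    (g : ℝ) (hg : 0 < g)
    (f : ℝ → ℝ) (hf : Measurable f) (C : ℝ) (hfC : ∀ x, |f x| ≤ C) :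
    ∫ γ in Set.Ioi (0 : ℝ), f (νinv (g + γ)) * Real.exp (-γ)
      = ∫ y in Set.Ioo 0 (νinv g), f y * Real.exp (-(ν (Set.Ico y (νinv g))).toReal) ∂ν := by
  classical
  have hνi : ∀ x : ℝ, νinv x = sInf (InvLevy8.S ν x) := hνinv
  set b := νinv g with hbdef
  have hb0 : 0 < b := by
    rw [hbdef, hνi]; exact key0 hν_inf hν_tail hg
  have hTb : ν (Set.Ici b) = ENNReal.ofReal g := by
    rw [hbdef, hνi]; exact key1 hν_atomless hν_inf hν_tail hg
  set φ : ℝ → ℝ := fun y => (ν (Set.Ico y b)).toReal with hφdef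
  have hφmeas : Measurable φ := by
    have hanti : Antitone (fun y => ν (Set.Ico y b)) := fun y y' h =>
      measure_mono (fun z hz => ⟨h.trans hz.1, hz.2⟩)
    exact ENNReal.measurable_toReal.comp hanti.measurable
  have hφnonneg : ∀ y, 0 ≤ φ y := fun y => ENNReal.toReal_nonneg
  have hfin : ∀ y : ℝ, 0 < y → ν (Set.Ico y b) ≠ ⊤ := fun y hy =>
    (lt_of_le_of_lt (measure_mono (fun z hz => hz.1)) (hν_tail y hy)).ne
  have hsplit : ∀ y : ℝ, y ≤ b → ν (Set.Ici y) = ν (Set.Ico y b) + ν (Set.Ici b) := by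
    intro y hy
    rw [← Set.Ico_union_Ici_eq_Ici hy, measure_union ?_ measurableSet_Ici]
    exact Set.disjoint_left.2 fun z hz hz' => absurd hz.2 (not_lt.2 hz')
  have hφeq : ∀ y ∈ Set.Ioo 0 b, ν (Set.Ici y) = ENNReal.ofReal (g + φ y) := by
    intro y hy
    rw [hsplit y hy.2.le, hTb, ENNReal.ofReal_add hg.le (hφnonneg y),
      ENNReal.ofReal_toReal (hfin y hy.1), add_comm]
  have hchar : ∀ y ∈ Set.Ioo 0 b, ∀ c : ℝ, 0 ≤ c → (φ y ≤ c ↔ νinv (g + c) ≤ y) := by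
    intro y hy c hc
    have h1 : φ y ≤ c ↔ ENNReal.ofReal (g + φ y) ≤ ENNReal.ofReal (g + c) := by
      rw [ENNReal.ofReal_le_ofReal_iff (by linarith)]
      constructor <;> intro h <;> linarith
    rw [h1, ← hφeq y hy, hνi]
    exact keyChar hν_atomless hν_inf hν_tail (by linarith) hy.1
  have hφpos : ∀ y ∈ Set.Ioo 0 b, 0 < φ y := by
    intro y hy
    by_contra hcon
    push_neg at hcon
    have := (hchar y hy 0 le_rfl).1 hcon
    rw [add_zero] at this
    exact absurd hy.2 (not_lt.2 this)
  -- computation of the pushforward on intervals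
  have hcompute : ∀ a c : ℝ, a < c →
      ν (φ ⁻¹' Set.Ioc a c ∩ Set.Ioo 0 b) = ENNReal.ofReal (c - max a 0) := by
    intro a c hac
    rcases le_or_gt c 0 with hc | hc
    · have hempty : φ ⁻¹' Set.Ioc a c ∩ Set.Ioo 0 b = ∅ := by
        ext y
        simp only [Set.mem_inter_iff, Set.mem_preimage, Set.mem_Ioc, Set.mem_empty_iff_false,
          iff_false, not_and, and_imp]
        intro _ hyc hy0
        exact absurd (hyc.trans hc) (not_le.2 (hφpos y hy0))
      rw [hempty, measure_empty, Eq.comm, ENNReal.ofReal_eq_zero]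
      have : (0:ℝ) ≤ max a 0 := le_max_right a 0
      linarith
    · set a' := max a 0 with ha'def
      have ha'0 : 0 ≤ a' := le_max_right a 0
      have ha'c : a' < c := max_lt hac hc
      set u := νinv (g + c) with hudef
      set v := νinv (g + a') with hvdef
      have hu0 : 0 < u := by rw [hudef, hνi]; exact key0 hν_inf hν_tail (by linarith)
      have hvb : v ≤ b := by
        rw [hvdef, hbdef, hνi, hνi]
        exact keyAnti hν_atomless hν_inf hν_tail hg (by linarith)
      have huv : u ≤ v := by
        rw [hudef, hvdef, hνi, hνi]
        exact keyAnti hν_atomless hν_inf hν_tail (by linarith) (by linarith)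
      have hIu : ν (Set.Ici u) = ENNReal.ofReal (g + c) := by
        rw [hudef, hνi]; exact key1 hν_atomless hν_inf hν_tail (by linarith)
      have hIv : ν (Set.Ici v) = ENNReal.ofReal (g + a') := by
        rw [hvdef, hνi]; exact key1 hν_atomless hν_inf hν_tail (by linarith)
      have hset : φ ⁻¹' Set.Ioc a c ∩ Set.Ioo 0 b = Set.Ico u v := by
        ext y
        simp only [Set.mem_inter_iff, Set.mem_preimage, Set.mem_Ioc, Set.mem_Ioo, Set.mem_Ico]
        constructor
        · rintro ⟨⟨hay, hyc⟩, hy0, hyb⟩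
          refine ⟨(hchar y ⟨hy0, hyb⟩ c hc.le).1 hyc, ?_⟩
          by_contra hvy
          push_neg at hvy
          have := (hchar y ⟨hy0, hyb⟩ a' ha'0).2 hvy
          exact absurd this (not_le.2 (max_lt hay (hφpos y ⟨hy0, hyb⟩)))
        · rintro ⟨huy, hyv⟩
          have hy0 : 0 < y := hu0.trans_le huy
          have hyb : y < b := hyv.trans_le hvb
          refine ⟨⟨?_, (hchar y ⟨hy0, hyb⟩ c hc.le).2 huy⟩, hy0, hyb⟩
          have ha'y : ¬ φ y ≤ a' := fun hcon =>
            absurd ((hchar y ⟨hy0, hyb⟩ a' ha'0).1 hcon) (not_le.2 hyv)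
          have := lt_of_not_ge ha'y
          exact lt_of_le_of_lt (le_max_left a 0) this
      rw [hset, ← Set.Ici_diff_Ici,
        measure_diff (Set.Ici_subset_Ici.2 huv) measurableSet_Ici.nullMeasurableSet
          (by rw [hIv]; exact ENNReal.ofReal_ne_top),
        hIu, hIv, ← ENNReal.ofReal_sub _ (by linarith)]
      ring_nf
  -- the pushforward measure is Lebesgue on (0, ∞)
  have hmap : Measure.map φ (ν.restrict (Set.Ioo 0 b)) = volume.restrict (Set.Ioi 0) := by
    refine Measure.ext_of_Ioc' _ _ (fun a c hac => ?_) (fun a c hac => ?_)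
    · rw [Measure.map_apply hφmeas measurableSet_Ioc,
        Measure.restrict_apply (hφmeas measurableSet_Ioc), hcompute a c hac]
      exact ENNReal.ofReal_ne_top
    · rw [Measure.map_apply hφmeas measurableSet_Ioc,
        Measure.restrict_apply (hφmeas measurableSet_Ioc), hcompute a c hac,
        Measure.restrict_apply measurableSet_Ioc, Set.Ioc_inter_Ioi, Real.volume_Ioc]
  -- almost everywhere, νinv (g + φ y) = y
  have hBq : ∀ q : ℚ, ν {y : ℝ | y ∈ Set.Ioo 0 b ∧ (q:ℝ) < y ∧ ν (Set.Ioo (q:ℝ) y) = 0} = 0 := by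
    intro q
    set E := {y : ℝ | y ∈ Set.Ioo 0 b ∧ (q:ℝ) < y ∧ ν (Set.Ioo (q:ℝ) y) = 0} with hEdef
    rcases E.eq_empty_or_nonempty with hE | hE
    · rw [hE]; exact measure_empty
    · have hbdd : BddAbove E := ⟨b, fun y hy => hy.1.2.le⟩
      set e := sSup E with hedef
      have hsub : E ⊆ Set.Ioc (q:ℝ) e := fun y hy => ⟨hy.2.1, le_csSup hbdd hy⟩
      refine measure_mono_null hsub ?_
      have hIoo : ν (Set.Ioo (q:ℝ) e) = 0 := by
        refine measure_mono_null (?_ : Set.Ioo (q:ℝ) e ⊆ ⋃ n : ℕ, Set.Ioo (q:ℝ) (e - 1/((n:ℝ)+1)))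
          (measure_iUnion_null fun n => ?_)
        · intro z hz
          obtain ⟨n, hn⟩ := exists_nat_one_div_lt (sub_pos.2 hz.2)
          exact Set.mem_iUnion.2 ⟨n, hz.1, by linarith⟩
        · rcases le_or_gt (e - 1/((n:ℝ)+1)) (q:ℝ) with h | h
          · rw [Set.Ioo_eq_empty (fun hcon => absurd (hcon.trans_le h) (lt_irrefl _)), measure_empty]
          · have hlt : e - 1/((n:ℝ)+1) < e := by
              have : (0:ℝ) < 1/((n:ℝ)+1) := by positivity
              linarith
            obtain ⟨y, hyE, hy⟩ := exists_lt_of_lt_csSup hE hlt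
            exact measure_mono_null
              (show Set.Ioo (q:ℝ) (e - 1/((n:ℝ)+1)) ⊆ Set.Ioo (q:ℝ) y from
                fun z hz => ⟨hz.1, hz.2.trans hy⟩) hyE.2.2
      refine measure_mono_null (?_ : Set.Ioc (q:ℝ) e ⊆ Set.Ioo (q:ℝ) e ∪ {e}) ?_
      · intro z hz
        rcases lt_or_eq_of_le hz.2 with h | h
        · exact Or.inl ⟨hz.1, h⟩
        · exact Or.inr h
      · exact measure_union_null hIoo (hν_atomless e)
  have hae : ∀ᵐ y ∂(ν.restrict (Set.Ioo 0 b)), νinv (g + φ y) = y := by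
    rw [ae_restrict_iff' measurableSet_Ioo, ae_iff]
    refine measure_mono_null (fun y hy => ?_)
      (measure_iUnion_null (s := fun q : ℚ =>
        {y : ℝ | y ∈ Set.Ioo 0 b ∧ (q:ℝ) < y ∧ ν (Set.Ioo (q:ℝ) y) = 0}) hBq)
    simp only [Set.mem_setOf_eq, not_forall] at hy
    obtain ⟨hyIoo, hne⟩ := hy
    have hx : 0 < g + φ y := by have := hφnonneg y; linarith
    have hofx : ENNReal.ofReal (g + φ y) = ν (Set.Ici y) := (hφeq y hyIoo).symm
    have hr_le : νinv (g + φ y) ≤ y := by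
      rw [hνi]
      exact csInf_le (S_bddBelow _) ⟨hyIoo.1, hofx.ge⟩
    have hr_lt : νinv (g + φ y) < y := lt_of_le_of_ne hr_le hne
    have hIr : ν (Set.Ici (νinv (g + φ y))) = ν (Set.Ici y) := by
      rw [hνi, key1 hν_atomless hν_inf hν_tail hx, hofx]
    have hIco : ν (Set.Ico (νinv (g + φ y)) y) = 0 := by
      rw [← Set.Ici_diff_Ici,
        measure_diff (Set.Ici_subset_Ici.2 hr_lt.le) measurableSet_Ici.nullMeasurableSet
          (hν_tail y hyIoo.1).ne, hIr, tsub_self]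
    obtain ⟨q, hq1, hq2⟩ := exists_rat_btwn hr_lt
    refine Set.mem_iUnion.2 ⟨q, hyIoo, hq2, ?_⟩
    exact measure_mono_null
      (show Set.Ioo (q:ℝ) y ⊆ Set.Ico (νinv (g + φ y)) y from
        fun z hz => ⟨(hq1.trans hz.1).le, hz.2⟩) hIco
  -- main chain of equalities
  set ψ : ℝ → ℝ := fun x => νinv (max x g) with hψdef
  have hψanti : Antitone ψ := by
    intro x x' hxx'
    simp only [hψdef, hνi]
    exact keyAnti hν_atomless hν_inf hν_tail (lt_of_lt_of_le hg (le_max_right x g))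
      (max_le_max hxx' le_rfl)
  have hhmeas : Measurable (fun γ : ℝ => f (ψ (g + γ)) * Real.exp (-γ)) := by
    exact ((hf.comp (hψanti.measurable.comp (measurable_const.add measurable_id))).mul
      (Real.measurable_exp.comp measurable_neg))
  calc ∫ γ in Set.Ioi (0:ℝ), f (νinv (g + γ)) * Real.exp (-γ)
      = ∫ γ in Set.Ioi (0:ℝ), f (ψ (g + γ)) * Real.exp (-γ) := by
        refine setIntegral_congr_fun measurableSet_Ioi (fun γ hγ => ?_)
        have : max (g + γ) g = g + γ := max_eq_left (by
          have : (0:ℝ) < γ := hγ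
          linarith)
        simp only [hψdef, this]
    _ = ∫ γ, f (ψ (g + γ)) * Real.exp (-γ) ∂(Measure.map φ (ν.restrict (Set.Ioo 0 b))) := by
        rw [hmap]
    _ = ∫ y, f (ψ (g + φ y)) * Real.exp (-(φ y)) ∂(ν.restrict (Set.Ioo 0 b)) :=
        integral_map hφmeas.aemeasurable hhmeas.aestronglyMeasurable
    _ = ∫ y in Set.Ioo 0 b, f y * Real.exp (-(ν (Set.Ico y b)).toReal) ∂ν := by
        refine integral_congr_ae ?_
        filter_upwards [hae] with y hy
        have hmax : max (g + φ y) g = g + φ y := max_eq_left (by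
          have := hφnonneg y; linarith)
        show f (νinv (max (g + φ y) g)) * Real.exp (-(φ y)) = f y * Real.exp (-(φ y))
        rw [hmax, hy]
end

section
/- Let (p_j)_{j≥1} be a sequence of strictly positive reals with ∑_j p_j < ∞, and let (W_j)_{j≥1} be i.i.d. standard Gumbel random variables. Then almost surely the supremum sup_j (W_j + log p_j) is finite and attained at a unique index J; moreover, for every k ≥ 1, P(J = k) = p_k / ∑_j p_j. -/
set_option maxHeartbeats 1000000

open MeasureTheory

/-- The standard Gumbel distribution: the Borel probability measure on `ℝ` with density
`x ↦ exp(−(x + e^{−x}))` with respect to Lebesgue measure. -/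
noncomputable def gumbelMeasure : Measure ℝ :=
  volume.withDensity fun x => ENNReal.ofReal (Real.exp (-(x + Real.exp (-x))))

namespace GumbelAux

open Real Set Filter Topology

lemma hasDerivAt_F (a : ℝ) (ha : 0 < a) (t : ℝ) :
    HasDerivAt (fun t => Real.exp (-(a * Real.exp (-t))) / a)
      (Real.exp (-(t + a * Real.exp (-t)))) t := by
  have h1 : HasDerivAt (fun t : ℝ => Real.exp (-t)) (-Real.exp (-t)) t := by
    simpa [Function.comp_def] using (Real.hasDerivAt_exp (-t)).comp t (hasDerivAt_neg t)
  have h2 : HasDerivAt (fun t : ℝ => -(a * Real.exp (-t))) (a * Real.exp (-t)) t := by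
    simpa [Pi.neg_def] using ((h1.const_mul a).neg)
  have h3 := (Real.hasDerivAt_exp (-(a * Real.exp (-t)))).comp t h2
  have h4 := h3.div_const a
  refine HasDerivAt.congr_deriv h4 ?_
  have h5 : a * Real.exp (-t) / a = Real.exp (-t) := by field_simp
  rw [mul_div_assoc, h5, ← Real.exp_add]
  ring_nf

lemma key_ineq (a t : ℝ) (ha : 0 < a) : -2 * t - 4 / a ≤ a * Real.exp (-t) := by
  rcases le_or_gt (-t) 0 with h | h
  · have h0 : 0 < a * Real.exp (-t) := by positivity
    have h1 : (0:ℝ) < 4 / a := by positivity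
    nlinarith
  · have h2 : 1 + (-t) / 2 ≤ Real.exp ((-t) / 2) := by
      linarith [Real.add_one_le_exp ((-t) / 2)]
    have h3 : Real.exp (-t) = Real.exp ((-t)/2) * Real.exp ((-t)/2) := by
      rw [← Real.exp_add]; ring_nf
    have h4 : (1 + (-t)/2) * (1 + (-t)/2) ≤ Real.exp (-t) := by
      rw [h3]
      have h5 : (0:ℝ) ≤ 1 + (-t)/2 := by linarith
      nlinarith [Real.exp_pos ((-t)/2)]
    have h6 : a * (4 / a) = 4 := by field_simp
    have h7 : (0:ℝ) ≤ 4 / a := by positivity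
    nlinarith [mul_le_mul_of_nonneg_left h4 ha.le, sq_nonneg (a * (1 + (-t)/2) - 2),
      mul_pos ha ha]

lemma integrable_density (a : ℝ) (ha : 0 < a) :
    Integrable (fun t => Real.exp (-(t + a * Real.exp (-t)))) := by
  have hcont : Continuous (fun t : ℝ => Real.exp (-(t + a * Real.exp (-t)))) := by
    fun_prop
  rw [← integrableOn_univ, ← Set.Iic_union_Ioi (a := (0:ℝ))]
  apply IntegrableOn.union
  · have hbd : IntegrableOn (fun t => Real.exp (4/a) * Real.exp t) (Iic (0:ℝ)) :=
      (integrableOn_exp_Iic 0).const_mul _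
    refine Integrable.mono hbd hcont.aestronglyMeasurable ?_
    filter_upwards with t
    rw [Real.norm_eq_abs, Real.norm_eq_abs, abs_of_pos (by positivity),
      abs_of_pos (by positivity), ← Real.exp_add]
    apply Real.exp_le_exp.2
    have := key_ineq a t ha
    linarith
  · have hbd : IntegrableOn (fun t : ℝ => Real.exp (-1 * t)) (Ioi (0:ℝ)) :=
      exp_neg_integrableOn_Ioi 0 one_pos
    refine Integrable.mono hbd hcont.aestronglyMeasurable ?_
    filter_upwards with t
    rw [Real.norm_eq_abs, Real.norm_eq_abs, abs_of_pos (by positivity),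
      abs_of_pos (by positivity)]
    apply Real.exp_le_exp.2
    have : 0 ≤ a * Real.exp (-t) := by positivity
    linarith

lemma tendsto_F_atTop (a : ℝ) (ha : 0 < a) :
    Tendsto (fun t => Real.exp (-(a * Real.exp (-t))) / a) atTop (𝓝 (1/a)) := by
  have h1 : Tendsto (fun t : ℝ => Real.exp (-t)) atTop (𝓝 0) :=
    Real.tendsto_exp_atBot.comp tendsto_neg_atTop_atBot
  have h2 : Tendsto (fun t : ℝ => -(a * Real.exp (-t))) atTop (𝓝 0) := by
    simpa using ((h1.const_mul a).neg)
  have h3 : Tendsto (fun t : ℝ => Real.exp (-(a * Real.exp (-t)))) atTop (𝓝 1) := by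
    simpa [Function.comp_def] using (Real.continuous_exp.tendsto 0).comp h2
  simpa using h3.div_const a

lemma tendsto_F_atBot (a : ℝ) (ha : 0 < a) :
    Tendsto (fun t => Real.exp (-(a * Real.exp (-t))) / a) atBot (𝓝 0) := by
  have h1 : Tendsto (fun t : ℝ => Real.exp (-t)) atBot atTop :=
    Real.tendsto_exp_atTop.comp tendsto_neg_atBot_atTop
  have h2 : Tendsto (fun t : ℝ => -(a * Real.exp (-t))) atBot atBot :=
    tendsto_neg_atTop_atBot.comp (h1.const_mul_atTop ha)
  have h3 : Tendsto (fun t : ℝ => Real.exp (-(a * Real.exp (-t)))) atBot (𝓝 0) :=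
    Real.tendsto_exp_atBot.comp h2
  simpa using h3.div_const a

lemma integral_density (a : ℝ) (ha : 0 < a) :
    ∫ t, Real.exp (-(t + a * Real.exp (-t))) = 1 / a := by
  have := integral_of_hasDerivAt_of_tendsto (fun t => hasDerivAt_F a ha t)
    (integrable_density a ha) (tendsto_F_atBot a ha) (tendsto_F_atTop a ha)
  simpa using this

lemma lintegral_density (a : ℝ) (ha : 0 < a) :
    ∫⁻ t, ENNReal.ofReal (Real.exp (-(t + a * Real.exp (-t)))) = ENNReal.ofReal (1 / a) := by
  rw [← ofReal_integral_eq_lintegral_ofReal (integrable_density a ha)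
    (Filter.Eventually.of_forall fun t => (Real.exp_pos _).le), integral_density a ha]

lemma integral_density_Iic (a : ℝ) (ha : 0 < a) (b : ℝ) :
    ∫ t in Iic b, Real.exp (-(t + a * Real.exp (-t)))
      = Real.exp (-(a * Real.exp (-b))) / a := by
  have := integral_Iic_of_hasDerivAt_of_tendsto' (a := b)
    (fun x _ => hasDerivAt_F a ha x) (integrable_density a ha).integrableOn
    (tendsto_F_atBot a ha)
  simpa using this


lemma meas_density : Measurable (fun x : ℝ => ENNReal.ofReal (Real.exp (-(x + Real.exp (-x))))) :=
  ENNReal.measurable_ofReal.comp (by fun_prop)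

instance : IsProbabilityMeasure gumbelMeasure := by
  constructor
  rw [gumbelMeasure, withDensity_apply _ MeasurableSet.univ, Measure.restrict_univ]
  have h := lintegral_density 1 one_pos
  simp only [one_mul] at h
  rw [h]
  norm_num

lemma gumbel_Iio (x : ℝ) :
    gumbelMeasure (Set.Iio x) = ENNReal.ofReal (Real.exp (-Real.exp (-x))) := by
  rw [gumbelMeasure, withDensity_apply _ measurableSet_Iio]
  have hint : IntegrableOn (fun t => Real.exp (-(t + Real.exp (-t)))) (Set.Iio x) := by
    have := (integrable_density 1 one_pos).integrableOn (s := Set.Iio x)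
    simpa using this
  rw [← ofReal_integral_eq_lintegral_ofReal hint
    (Filter.Eventually.of_forall fun t => (Real.exp_pos _).le)]
  congr 1
  rw [← integral_Iic_eq_integral_Iio]
  have := integral_density_Iic 1 one_pos x
  simpa using this

lemma gumbel_lintegral_exp (Q : ℝ) (hQ : 0 ≤ Q) :
    ∫⁻ t, ENNReal.ofReal (Real.exp (-(Q * Real.exp (-t)))) ∂gumbelMeasure
      = ENNReal.ofReal (1 / (1 + Q)) := by
  have hg : Measurable (fun t : ℝ => ENNReal.ofReal (Real.exp (-(Q * Real.exp (-t))))) :=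
    ENNReal.measurable_ofReal.comp (by fun_prop)
  rw [gumbelMeasure, lintegral_withDensity_eq_lintegral_mul _ meas_density hg]
  have heq : ∀ t : ℝ,
      ((fun x : ℝ => ENNReal.ofReal (Real.exp (-(x + Real.exp (-x))))) *
        (fun t : ℝ => ENNReal.ofReal (Real.exp (-(Q * Real.exp (-t)))))) t
      = ENNReal.ofReal (Real.exp (-(t + (1 + Q) * Real.exp (-t)))) := by
    intro t
    simp only [Pi.mul_apply]
    rw [← ENNReal.ofReal_mul (Real.exp_pos _).le, ← Real.exp_add]
    ring_nf
  rw [lintegral_congr heq, lintegral_density (1 + Q) (by linarith)]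



lemma prob_finset_inter
    {Ω : Type*} [MeasurableSpace Ω] (P : Measure Ω) [IsProbabilityMeasure P]
    (W : ℕ → Ω → ℝ) (hWmeas : ∀ k, Measurable (W k))
    (hWindep : ProbabilityTheory.iIndepFun W P)
    (hWlaw : ∀ k, Measure.map (W k) P = gumbelMeasure)
    (p : ℕ → ℝ) (hp : ∀ j, 0 < p j) (k : ℕ) (F : Finset ℕ) (hkF : k ∉ F) :
    P (⋂ j ∈ F, {ω | W j ω + Real.log (p j) < W k ω + Real.log (p k)})
      = ENNReal.ofReal (p k / (p k + ∑ j ∈ F, p j)) := by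
  classical
  set c : ℕ → ℝ := fun j => Real.log (p k) - Real.log (p j) with hc
  set X : Ω → (↥F → ℝ) := fun ω j => W (j : ℕ) ω with hXdef
  have hX : Measurable X := measurable_pi_lambda _ fun j => hWmeas j
  have hIndep : ProbabilityTheory.IndepFun (W k) X P := by
    have h0 := hWindep.indepFun_finset {k} F
      (Finset.disjoint_singleton_left.2 hkF) hWmeas
    have h1 := h0.comp
      (measurable_pi_apply (⟨k, Finset.mem_singleton_self k⟩ : ({k} : Finset ℕ)))
      measurable_id
    exact h1
  have hmap : P.map (fun ω => (W k ω, X ω)) = gumbelMeasure.prod (P.map X) := by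
    rw [← hWlaw k]
    exact (ProbabilityTheory.indepFun_iff_map_prod_eq_prod_map_map
      (hWmeas k).aemeasurable hX.aemeasurable).1 hIndep
  have hPX : IsProbabilityMeasure (P.map X) := Measure.isProbabilityMeasure_map hX.aemeasurable
  set E : Set (ℝ × (↥F → ℝ)) := {q | ∀ j : ↥F, q.2 j < q.1 + c j}
    with hEdef
  have hE : MeasurableSet E := by
    have : E = ⋂ j : ↥F, {q : ℝ × (↥F → ℝ) | q.2 j < q.1 + c j} := by
      ext q; simp [hEdef, Set.mem_iInter]
    rw [this]
    exact MeasurableSet.iInter fun j => measurableSet_lt (by fun_prop) (by fun_prop)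
  have hpre : (fun ω => (W k ω, X ω)) ⁻¹' E
      = ⋂ j ∈ F, {ω | W j ω + Real.log (p j) < W k ω + Real.log (p k)} := by
    ext ω
    simp only [hEdef, Set.mem_preimage, Set.mem_setOf_eq, Set.mem_iInter]
    constructor
    · intro h j hj
      have h2 := h ⟨j, hj⟩
      simp only [hXdef, hc] at h2
      linarith
    · intro h j
      have h2 := h (j : ℕ) j.2
      simp only [hXdef, hc]
      linarith
  have hinner : ∀ t : ℝ, (P.map X) {v : ↥F → ℝ | ∀ j : ↥F, v j < t + c j}
      = ENNReal.ofReal (Real.exp (-((∑ j ∈ F, p j) / p k * Real.exp (-t)))) := by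
    intro t
    have hmeasset : MeasurableSet {v : ↥F → ℝ | ∀ j : ↥F, v j < t + c j} := by
      have : {v : ↥F → ℝ | ∀ j : ↥F, v j < t + c j}
          = ⋂ j : ↥F, {v : ↥F → ℝ | v j < t + c j} := by
        ext v; simp [Set.mem_iInter]
      rw [this]
      exact MeasurableSet.iInter fun j =>
        measurableSet_lt (measurable_pi_apply j) measurable_const
    rw [Measure.map_apply hX hmeasset]
    have hpre2 : X ⁻¹' {v : ↥F → ℝ | ∀ j : ↥F, v j < t + c j}
        = ⋂ j ∈ F, W j ⁻¹' Set.Iio (t + c j) := by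
      ext ω
      simp only [Set.mem_preimage, Set.mem_setOf_eq, Set.mem_iInter, hXdef, Set.mem_Iio]
      exact ⟨fun h j hj => h ⟨j, hj⟩, fun h j => h (j : ℕ) j.2⟩
    rw [hpre2, hWindep.meas_biInter (fun i _ => ⟨Set.Iio (t + c i), measurableSet_Iio, rfl⟩)]
    have hterm : ∀ j ∈ F, P (W j ⁻¹' Set.Iio (t + c j))
        = ENNReal.ofReal (Real.exp (-(Real.exp (-t) * (p j / p k)))) := by
      intro j hj
      rw [← Measure.map_apply (hWmeas j) measurableSet_Iio, hWlaw j, gumbel_Iio]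
      congr 2
      rw [hc]
      simp only
      rw [show -(t + (Real.log (p k) - Real.log (p j))) = -t + (Real.log (p j) - Real.log (p k))
        by ring, Real.exp_add, Real.exp_sub, Real.exp_log (hp j), Real.exp_log (hp k)]
    rw [Finset.prod_congr rfl hterm, ← ENNReal.ofReal_prod_of_nonneg
      (fun j _ => (Real.exp_pos _).le)]
    congr 1
    rw [← Real.exp_sum]
    congr 1
    rw [Finset.sum_neg_distrib, ← Finset.mul_sum, Finset.sum_div]
    ring
  calc P (⋂ j ∈ F, {ω | W j ω + Real.log (p j) < W k ω + Real.log (p k)})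
      = P.map (fun ω => (W k ω, X ω)) E := by
        rw [Measure.map_apply ((hWmeas k).prodMk hX) hE, hpre]
    _ = (gumbelMeasure.prod (P.map X)) E := by rw [hmap]
    _ = ∫⁻ t, (P.map X) {v : ↥F → ℝ | ∀ j : ↥F, v j < t + c j}
          ∂gumbelMeasure := by
        rw [Measure.prod_apply hE]
        rfl
    _ = ∫⁻ t, ENNReal.ofReal (Real.exp (-((∑ j ∈ F, p j) / p k * Real.exp (-t))))
          ∂gumbelMeasure := lintegral_congr hinner
    _ = ENNReal.ofReal (1 / (1 + (∑ j ∈ F, p j) / p k)) := by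
        refine gumbel_lintegral_exp _ ?_
        exact div_nonneg (Finset.sum_nonneg fun j _ => (hp j).le) (hp k).le
    _ = ENNReal.ofReal (p k / (p k + ∑ j ∈ F, p j)) := by
        congr 1
        have hpk := hp k
        rw [show 1 + (∑ j ∈ F, p j) / p k = (p k + ∑ j ∈ F, p j) / p k by field_simp,
          one_div_div]


end GumbelAux

open Filter Topology

/-- (Infinite Gumbel-max sampling lemma.)  If `(p_j)` are strictly
positive with `∑_j p_j < ∞` and `(W_j)` are i.i.d. standard Gumbel, then almost surely
`sup_j (W_j + log p_j)` is attained at a unique index `J`, and `P(J = k) = p_k / ∑_j p_j`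
for every `k`. -/
theorem gumbel_max_sampling
    {Ω : Type*} [MeasurableSpace Ω] (P : Measure Ω) [IsProbabilityMeasure P]
    (W : ℕ → Ω → ℝ) (hWmeas : ∀ k, Measurable (W k))
    (hWindep : ProbabilityTheory.iIndepFun W P)
    (hWlaw : ∀ k, Measure.map (W k) P = gumbelMeasure)
    (p : ℕ → ℝ) (hp : ∀ j, 0 < p j) (hsum : Summable p) :
    (∀ᵐ ω ∂P, ∃! J : ℕ, ∀ j : ℕ, j ≠ J →
        W j ω + Real.log (p j) < W J ω + Real.log (p J)) ∧
      ∀ k : ℕ,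
        P {ω | ∀ j : ℕ, j ≠ k → W j ω + Real.log (p j) < W k ω + Real.log (p k)}
          = ENNReal.ofReal (p k / ∑' j, p j) := by
  classical
  have hS0 : 0 < ∑' j, p j := Summable.tsum_pos hsum (fun j => (hp j).le) 0 (hp 0)
  set A : ℕ → Set Ω := fun k =>
    {ω | ∀ j : ℕ, j ≠ k → W j ω + Real.log (p j) < W k ω + Real.log (p k)} with hA
  have hAmeas : ∀ k, MeasurableSet (A k) := by
    intro k
    have : A k = ⋂ (j : ℕ) (_ : j ≠ k),
        {ω | W j ω + Real.log (p j) < W k ω + Real.log (p k)} := by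
      ext ω; simp [hA, Set.mem_iInter]
    rw [this]
    exact MeasurableSet.iInter fun j => MeasurableSet.iInter fun _ =>
      measurableSet_lt ((hWmeas j).add_const _) ((hWmeas k).add_const _)
  -- main computation
  have hMain : ∀ k, P (A k) = ENNReal.ofReal (p k / ∑' j, p j) := by
    intro k
    set B : ℕ → Set Ω := fun n => ⋂ j ∈ (Finset.range n).erase k,
      {ω | W j ω + Real.log (p j) < W k ω + Real.log (p k)} with hB
    have hBmeas : ∀ n, MeasurableSet (B n) := by
      intro n
      exact Set.Finite.measurableSet_biInter (Finset.finite_toSet _)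
        fun j _ => measurableSet_lt ((hWmeas j).add_const _) ((hWmeas k).add_const _)
    have hBanti : Antitone B := by
      intro n m hnm ω hω
      simp only [hB, Set.mem_iInter] at hω ⊢
      intro j hj
      exact hω j (Finset.mem_erase.2 ⟨(Finset.mem_erase.1 hj).1,
        Finset.mem_range.2 (lt_of_lt_of_le (Finset.mem_range.1 (Finset.mem_erase.1 hj).2) hnm)⟩)
    have hAB : A k = ⋂ n, B n := by
      ext ω
      simp only [hA, hB, Set.mem_setOf_eq, Set.mem_iInter]
      constructor
      · intro h n j hj
        exact h j (Finset.mem_erase.1 hj).1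
      · intro h j hj
        exact h (j + 1) j
          (Finset.mem_erase.2 ⟨hj, Finset.mem_range.2 (Nat.lt_succ_self j)⟩)
    have hBval : ∀ n, P (B n) = ENNReal.ofReal
        (p k / (p k + ∑ j ∈ (Finset.range n).erase k, p j)) := fun n =>
      GumbelAux.prob_finset_inter P W hWmeas hWindep hWlaw p hp k _
        (fun h => (Finset.mem_erase.1 h).1 rfl)
    have hlim1 : Tendsto (P ∘ B) atTop (𝓝 (P (⋂ n, B n))) :=
      tendsto_measure_iInter_atTop (fun n => (hBmeas n).nullMeasurableSet) hBanti
        ⟨0, measure_ne_top P _⟩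
    have hlim2 : Tendsto (P ∘ B) atTop (𝓝 (ENNReal.ofReal (p k / ∑' j, p j))) := by
      have h1 : Tendsto (fun n => p k + ∑ j ∈ (Finset.range n).erase k, p j) atTop
          (𝓝 (∑' j, p j)) := by
        apply Tendsto.congr' _ hsum.hasSum.tendsto_sum_nat
        filter_upwards [Filter.eventually_ge_atTop (k + 1)] with n hn
        exact (Finset.add_sum_erase _ p (Finset.mem_range.2 hn)).symm
      have h2 : Tendsto (fun n => p k / (p k + ∑ j ∈ (Finset.range n).erase k, p j)) atTop
          (𝓝 (p k / ∑' j, p j)) := tendsto_const_nhds.div h1 (ne_of_gt hS0)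
      have h3 := (ENNReal.continuous_ofReal.tendsto _).comp h2
      apply h3.congr
      intro n
      exact (hBval n).symm
    rw [hAB]
    exact tendsto_nhds_unique hlim1 hlim2
  have hdisj : Pairwise (Function.onFun Disjoint A) := by
    intro i j hij
    rw [Function.onFun, Set.disjoint_left]
    intro ω hi hj
    exact lt_asymm (hi j hij.symm) (hj i hij)
  refine ⟨?_, fun k => hMain k⟩
  have hsum1 : P (⋃ k, A k) = 1 := by
    rw [measure_iUnion hdisj hAmeas]
    have h1 : ∀ n, 0 ≤ p n / ∑' j, p j := fun n => div_nonneg (hp n).le hS0.le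
    calc ∑' k, P (A k) = ∑' k, ENNReal.ofReal (p k / ∑' j, p j) := by
          exact tsum_congr hMain
      _ = ENNReal.ofReal (∑' k, p k / ∑' j, p j) :=
          (ENNReal.ofReal_tsum_of_nonneg h1 (hsum.div_const _)).symm
      _ = 1 := by
          rw [tsum_div_const, div_self (ne_of_gt hS0)]
          simp
  have hae : ∀ᵐ ω ∂P, ω ∈ ⋃ k, A k := by
    have hc : P ((⋃ k, A k)ᶜ) = 0 := by
      rw [measure_compl (MeasurableSet.iUnion hAmeas) (measure_ne_top P _), hsum1,
        measure_univ]
      simp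
    rw [ae_iff]
    convert hc using 2
    rfl
  filter_upwards [hae] with ω hω
  rcases Set.mem_iUnion.1 hω with ⟨k, hk⟩
  refine ⟨k, hk, fun y hy => ?_⟩
  by_contra hne
  exact lt_asymm (hk y hne) (hy k fun h => hne (h ▸ rfl))
end

section
/- Let (p_j)_{j≥1} be a nonincreasing sequence of strictly positive reals with ∑_j p_j = 1, and let 1 ≤ d ≤ K be integers. Let D be the set of d-tuples of pairwise distinct positive integers, W = ∑_{(j_1,…,j_d)∈D} ∏_{i=1}^d p_{j_i} (which is strictly positive), and let q be the probability mass function on D given by q(j_1,…,j_d) = (∏_{i=1}^d p_{j_i}) / W, i.e. the law of d i.i.d. Categorical(p) draws conditioned to be pairwise distinct. Then q({(j_1,…,j_d) ∈ D : max_i j_i ≤ K}) ≥ ((∑_{j=d}^K p_j) / (1 − ∑_{j=1}^{d−1} p_j))^d. -/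
open scoped ENNReal
open Function

noncomputable def WWaux (q : ℕ → ℝ≥0∞) (m : ℕ) (S : Finset ℕ) : ℝ≥0∞ :=
  ∑' v : Fin m → ℕ, if Function.Injective v ∧ ∀ i, v i ∉ S then ∏ i, q (v i) else 0

noncomputable def NNaux (q : ℕ → ℝ≥0∞) (K m : ℕ) (S : Finset ℕ) : ℝ≥0∞ :=
  ∑' v : Fin m → ℕ,
    if Function.Injective v ∧ (∀ i, v i ∉ S) ∧ (∀ i, v i < K) then ∏ i, q (v i) else 0

lemma WWaux_zero (q : ℕ → ℝ≥0∞) (S : Finset ℕ) : WWaux q 0 S = 1 := by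
  rw [WWaux, tsum_eq_single (fun i => i.elim0)]
  · simp [Function.Injective]
  · intro b hb
    exact absurd (funext fun i => i.elim0) hb

lemma NNaux_zero (q : ℕ → ℝ≥0∞) (K : ℕ) (S : Finset ℕ) : NNaux q K 0 S = 1 := by
  rw [NNaux, tsum_eq_single (fun i => i.elim0)]
  · simp [Function.Injective]
  · intro b hb
    exact absurd (funext fun i => i.elim0) hb

lemma WWaux_succ (q : ℕ → ℝ≥0∞) (m : ℕ) (S : Finset ℕ) :
    WWaux q (m+1) S = ∑' j : ℕ, if j ∉ S then q j * WWaux q m (insert j S) else 0 := by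
  rw [WWaux, ← (Fin.consEquiv (fun _ : Fin (m+1) => ℕ)).tsum_eq, ENNReal.tsum_prod']
  refine tsum_congr fun j => ?_
  by_cases hj : j ∈ S
  · rw [if_neg (by simpa using hj)]
    refine (Summable.tsum_eq_zero_iff ENNReal.summable).2 fun w => ?_
    rw [if_neg]
    rintro ⟨-, h2⟩
    exact (h2 0) (by simpa using hj)
  · rw [if_pos hj, WWaux, ← ENNReal.tsum_mul_left]
    refine tsum_congr fun w => ?_
    simp only [Fin.consEquiv_apply]
    rw [Fin.prod_univ_succ]
    simp only [Fin.cons_zero, Fin.cons_succ]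
    by_cases hc : Function.Injective w ∧ ∀ i, w i ∉ insert j S
    · rw [if_pos, if_pos hc]
      constructor
      · exact Fin.cons_injective_iff.2 ⟨by
          rintro ⟨i, hi⟩
          exact (hc.2 i) (by rw [show w i = j from hi]; exact Finset.mem_insert_self j S), hc.1⟩
      · intro i
        refine Fin.cases ?_ ?_ i
        · simpa using hj
        · intro k
          simp only [Fin.cons_succ]
          exact fun h => (hc.2 k) (Finset.mem_insert_of_mem h)
    · rw [if_neg hc, mul_zero, if_neg]
      rintro ⟨h1, h2⟩
      refine hc ⟨(Fin.cons_injective_iff.1 h1).2, fun i hmem => ?_⟩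
      rcases Finset.mem_insert.1 hmem with h | h
      · exact (Fin.cons_injective_iff.1 h1).1 ⟨i, h⟩
      · exact (h2 i.succ) (by simpa using h)

lemma NNaux_succ (q : ℕ → ℝ≥0∞) (K m : ℕ) (S : Finset ℕ) :
    NNaux q K (m+1) S
      = ∑' j : ℕ, if j ∉ S ∧ j < K then q j * NNaux q K m (insert j S) else 0 := by
  rw [NNaux, ← (Fin.consEquiv (fun _ : Fin (m+1) => ℕ)).tsum_eq, ENNReal.tsum_prod']
  refine tsum_congr fun j => ?_
  by_cases hj : j ∉ S ∧ j < K
  · rw [if_pos hj, NNaux, ← ENNReal.tsum_mul_left]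
    refine tsum_congr fun w => ?_
    simp only [Fin.consEquiv_apply]
    rw [Fin.prod_univ_succ]
    simp only [Fin.cons_zero, Fin.cons_succ]
    by_cases hc : Function.Injective w ∧ (∀ i, w i ∉ insert j S) ∧ (∀ i, w i < K)
    · rw [if_pos, if_pos hc]
      refine ⟨Fin.cons_injective_iff.2 ⟨?_, hc.1⟩, fun i => ?_, fun i => ?_⟩
      · rintro ⟨i, hi⟩
        exact (hc.2.1 i) (by rw [show w i = j from hi]; exact Finset.mem_insert_self j S)
      · refine Fin.cases ?_ ?_ i
        · simpa using hj.1
        · intro k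
          simp only [Fin.cons_succ]
          exact fun h => (hc.2.1 k) (Finset.mem_insert_of_mem h)
      · refine Fin.cases ?_ ?_ i
        · simpa using hj.2
        · intro k; simpa using hc.2.2 k
    · rw [if_neg hc, mul_zero, if_neg]
      rintro ⟨h1, h2, h3⟩
      refine hc ⟨(Fin.cons_injective_iff.1 h1).2, fun i hmem => ?_, fun i => by simpa using h3 i.succ⟩
      rcases Finset.mem_insert.1 hmem with h | h
      · exact (Fin.cons_injective_iff.1 h1).1 ⟨i, h⟩
      · exact (h2 i.succ) (by simpa using h)
  · rw [if_neg hj]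
    refine (Summable.tsum_eq_zero_iff ENNReal.summable).2 fun w => ?_
    rw [if_neg]
    rintro ⟨-, h2, h3⟩
    rcases not_and_or.1 hj with hj' | hj'
    · exact hj' (fun hmem => (h2 0) (by simpa using hmem)) |>.elim
    · exact hj' (by simpa using h3 0)

lemma snoc_inj_iff {n : ℕ} {x : Fin n → ℕ} {j : ℕ} :
    Function.Injective (Fin.snoc x j : Fin (n+1) → ℕ) ↔ j ∉ Set.range x ∧ Function.Injective x := by
  constructor
  · intro h
    constructor
    · rintro ⟨i, hi⟩
      have := @h i.castSucc (Fin.last n)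
        (by rw [Fin.snoc_castSucc, Fin.snoc_last, hi])
      exact absurd this (Fin.castSucc_lt_last i).ne
    · intro a b hab
      exact Fin.castSucc_injective _
        (@h a.castSucc b.castSucc (by rwa [Fin.snoc_castSucc, Fin.snoc_castSucc]))
  · rintro ⟨hr, hx⟩ a b
    refine Fin.lastCases ?_ (fun i => ?_) a
    · refine Fin.lastCases (fun _ => rfl) (fun k => ?_) b
      intro h; rw [Fin.snoc_last, Fin.snoc_castSucc] at h
      exact absurd ⟨k, h.symm⟩ hr
    · refine Fin.lastCases ?_ (fun k => ?_) b
      · intro h; rw [Fin.snoc_last, Fin.snoc_castSucc] at h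
        exact absurd ⟨i, h⟩ hr
      · intro h; rw [Fin.snoc_castSucc, Fin.snoc_castSucc] at h
        rw [hx h]

lemma NNaux_snoc (q : ℕ → ℝ≥0∞) (K m : ℕ) (S : Finset ℕ) :
    NNaux q K (m+1) S
      = ∑' w : Fin m → ℕ,
          if Function.Injective w ∧ (∀ i, w i ∉ S) ∧ (∀ i, w i < K) then
            (∏ i, q (w i)) * ∑' j : ℕ, (if j ∉ S ∧ j < K ∧ (∀ i, w i ≠ j) then q j else 0)
          else 0 := by
  rw [NNaux, ← (Fin.snocEquiv (fun _ : Fin (m+1) => ℕ)).tsum_eq, ENNReal.tsum_prod',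
    ENNReal.tsum_comm]
  refine tsum_congr fun w => ?_
  by_cases hc : Function.Injective w ∧ (∀ i, w i ∉ S) ∧ (∀ i, w i < K)
  · rw [if_pos hc, ← ENNReal.tsum_mul_left]
    refine tsum_congr fun j => ?_
    simp only [Fin.snocEquiv_apply]
    rw [Fin.prod_univ_castSucc]
    simp only [Fin.snoc_castSucc, Fin.snoc_last]
    by_cases hj : j ∉ S ∧ j < K ∧ (∀ i, w i ≠ j)
    · rw [if_pos hj, if_pos]
      refine ⟨snoc_inj_iff.2 ⟨?_, hc.1⟩, ?_, ?_⟩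
      · rintro ⟨i, hi⟩; exact hj.2.2 i hi
      · rw [Fin.forall_fin_succ']
        exact ⟨fun i => by simpa using hc.2.1 i, by simpa using hj.1⟩
      · rw [Fin.forall_fin_succ']
        exact ⟨fun i => by simpa using hc.2.2 i, by simpa using hj.2.1⟩
    · rw [if_neg hj, mul_zero, if_neg]
      rintro ⟨h1, h2, h3⟩
      rw [Fin.forall_fin_succ'] at h2 h3
      refine hj ⟨by simpa using h2.2, by simpa using h3.2, fun i hi => ?_⟩
      exact (snoc_inj_iff.1 h1).1 ⟨i, hi⟩
  · rw [if_neg hc]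
    refine (Summable.tsum_eq_zero_iff ENNReal.summable).2 fun j => ?_
    rw [if_neg]
    simp only [Fin.snocEquiv_apply]
    rintro ⟨h1, h2, h3⟩
    rw [Fin.forall_fin_succ'] at h2 h3
    refine hc ⟨(snoc_inj_iff.1 h1).2, fun i => by simpa using h2.1 i, fun i => by simpa using h3.1 i⟩

lemma WWaux_mono_insert (q : ℕ → ℝ≥0∞) (m : ℕ) (S : Finset ℕ) (j : ℕ) :
    WWaux q m (insert j S) ≤ WWaux q m S := by
  refine ENNReal.tsum_le_tsum fun v => ?_
  by_cases h1 : Function.Injective v ∧ ∀ i, v i ∉ insert j S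
  · rw [if_pos h1, if_pos ⟨h1.1, fun i hm => h1.2 i (Finset.mem_insert_of_mem hm)⟩]
  · rw [if_neg h1]; exact zero_le

lemma WWaux_le_one (q : ℕ → ℝ≥0∞) (hq1 : ∑' j, q j = 1) :
    ∀ (m : ℕ) (S : Finset ℕ), WWaux q m S ≤ 1 := by
  intro m
  induction m with
  | zero => intro S; rw [WWaux_zero]
  | succ m ih =>
    intro S
    rw [WWaux_succ]
    calc (∑' j : ℕ, if j ∉ S then q j * WWaux q m (insert j S) else 0)
        ≤ ∑' j : ℕ, q j := by
          refine ENNReal.tsum_le_tsum fun j => ?_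
          by_cases hj : j ∉ S
          · rw [if_pos hj]
            calc q j * WWaux q m (insert j S) ≤ q j * 1 :=
                  mul_le_mul_right (ih _) _
              _ = q j := mul_one _
          · rw [if_neg hj]; exact zero_le
      _ = 1 := hq1

lemma sum_card_le (q : ℕ → ℝ≥0∞) (hqa : Antitone q) :
    ∀ (n : ℕ) (C : Finset ℕ), C.card ≤ n → ∑ j ∈ C, q j ≤ ∑ j ∈ Finset.range n, q j := by
  intro n
  induction n with
  | zero => intro C hC; simp [Finset.card_eq_zero.1 (Nat.le_zero.1 hC)]
  | succ n ih =>
    intro C hC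
    by_cases hc : C.card ≤ n
    · exact (ih C hc).trans
        (Finset.sum_le_sum_of_subset (Finset.range_subset_range.2 (Nat.le_succ n)))
    · have hcard : C.card = n + 1 := le_antisymm hC (not_le.1 hc)
      have hne : C.Nonempty := Finset.card_pos.1 (by omega)
      set M := C.max' hne with hM
      have hMem : M ∈ C := C.max'_mem hne
      have hnM : n ≤ M := by
        have hsub : C ⊆ Finset.range (M + 1) :=
          fun x hx => Finset.mem_range.2 (Nat.lt_succ_of_le (C.le_max' x hx))
        have := Finset.card_le_card hsub
        rw [Finset.card_range] at this
        omega
      rw [← Finset.sum_erase_add C q hMem, Finset.sum_range_succ]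
      exact add_le_add (ih _ (by rw [Finset.card_erase_of_mem hMem, hcard]; omega)) (hqa hnM)

lemma key_tail (q : ℕ → ℝ≥0∞) (hqa : Antitone q) (hqt : ∀ j, q j ≠ ⊤)
    (a K : ℕ) (haK : a ≤ K) (C : Finset ℕ) (hC : C.card ≤ a) :
    ∑ j ∈ Finset.Ico a K, q j ≤ ∑' j : ℕ, if j ∉ C ∧ j < K then q j else 0 := by
  have h1 : ∑ j ∈ Finset.range K \ C, q j
      ≤ ∑' j : ℕ, if j ∉ C ∧ j < K then q j else 0 := by
    calc ∑ j ∈ Finset.range K \ C, q j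
        = ∑ j ∈ Finset.range K \ C, (if j ∉ C ∧ j < K then q j else 0) := by
          refine Finset.sum_congr rfl fun j hj => ?_
          rw [Finset.mem_sdiff, Finset.mem_range] at hj
          rw [if_pos ⟨hj.2, hj.1⟩]
      _ ≤ _ := ENNReal.sum_le_tsum _
  refine le_trans ?_ h1
  have h2 : ∑ j ∈ Finset.range K ∩ C, q j ≤ ∑ j ∈ Finset.range a, q j :=
    sum_card_le q hqa a _ (le_trans (Finset.card_le_card (Finset.inter_subset_right)) hC)
  have h3 : ∑ j ∈ Finset.range K ∩ C, q j + ∑ j ∈ Finset.range K \ C, q j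
      = ∑ j ∈ Finset.range K, q j := Finset.sum_inter_add_sum_sdiff _ _ _
  have h4 : ∑ j ∈ Finset.range a, q j + ∑ j ∈ Finset.Ico a K, q j
      = ∑ j ∈ Finset.range K, q j := by
    rw [Finset.range_eq_Ico, Finset.range_eq_Ico]
    exact Finset.sum_Ico_consecutive _ (Nat.zero_le a) haK
  have hAfin : ∑ j ∈ Finset.range a, q j ≠ ⊤ :=
    (ENNReal.sum_lt_top.2 fun j _ => (hqt j).lt_top).ne
  have : ∑ j ∈ Finset.range a, q j + ∑ j ∈ Finset.Ico a K, q j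
      ≤ ∑ j ∈ Finset.range a, q j + ∑ j ∈ Finset.range K \ C, q j := by
    rw [h4, ← h3]
    exact add_le_add_left h2 _
  exact (ENNReal.add_le_add_iff_left hAfin).1 this

lemma claim2 (q : ℕ → ℝ≥0∞) (hqa : Antitone q) (hqt : ∀ j, q j ≠ ⊤)
    (a K m : ℕ) (haK : a ≤ K) (S : Finset ℕ) (h : S.card + m ≤ a) :
    (∑ j ∈ Finset.Ico a K, q j) * NNaux q K m S ≤ NNaux q K (m+1) S := by
  rw [NNaux_snoc, NNaux, ← ENNReal.tsum_mul_left]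
  refine ENNReal.tsum_le_tsum fun w => ?_
  by_cases hc : Function.Injective w ∧ (∀ i, w i ∉ S) ∧ (∀ i, w i < K)
  · rw [if_pos hc, if_pos hc, mul_comm]
    refine mul_le_mul_right ?_ _
    have hcong : ∀ j : ℕ,
        (if j ∉ S ∧ j < K ∧ (∀ i, w i ≠ j) then q j else 0)
          = (if j ∉ (S ∪ Finset.image w Finset.univ) ∧ j < K then q j else 0) := by
      intro j
      refine if_congr ?_ rfl rfl
      simp only [Finset.mem_union, Finset.mem_image, Finset.mem_univ, true_and, not_or,
        not_exists]
      constructor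
      · rintro ⟨h1, h2, h3⟩; exact ⟨⟨h1, fun i => h3 i⟩, h2⟩
      · rintro ⟨⟨h1, h3⟩, h2⟩; exact ⟨h1, h2, fun i => h3 i⟩
    rw [tsum_congr hcong]
    refine key_tail q hqa hqt a K haK _ ?_
    calc (S ∪ Finset.image w Finset.univ).card
        ≤ S.card + (Finset.image w Finset.univ).card := Finset.card_union_le _ _
      _ ≤ S.card + m := by
          refine add_le_add_right ?_ _
          exact (Finset.card_image_le).trans (by simp)
      _ ≤ a := h
  · rw [if_neg hc, if_neg hc, mul_zero]

lemma mainind (q : ℕ → ℝ≥0∞) (hqa : Antitone q) (hqt : ∀ j, q j ≠ ⊤)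
    (hq1 : ∑' j, q j = 1) (a K : ℕ) (haK : a ≤ K) :
    ∀ (m : ℕ) (S : Finset ℕ), S.card + m ≤ a + 1 →
      WWaux q m S * (∑ j ∈ Finset.Ico a K, q j) ^ m
        ≤ NNaux q K m S
            * ((∑ j ∈ Finset.Ico a K, q j) + ∑' j : ℕ, if K ≤ j then q j else 0) ^ m := by
  set TK : ℝ≥0∞ := ∑ j ∈ Finset.Ico a K, q j with hTKdef
  set U : ℝ≥0∞ := ∑' j : ℕ, if K ≤ j then q j else 0 with hUdef
  intro m
  induction m with
  | zero => intro S hS; simp [WWaux_zero, NNaux_zero]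
  | succ m ih =>
    intro S hS
    have step1 : WWaux q (m+1) S
        ≤ (∑' j : ℕ, if j ∉ S ∧ j < K then q j * WWaux q m (insert j S) else 0)
          + ∑' j : ℕ, (if K ≤ j then q j else 0) * WWaux q m S := by
      rw [WWaux_succ, ← ENNReal.tsum_add]
      refine ENNReal.tsum_le_tsum fun j => ?_
      by_cases hj : j ∉ S
      · rw [if_pos hj]
        by_cases hjK : j < K
        · rw [if_pos ⟨hj, hjK⟩]
          exact le_add_right le_rfl
        · rw [if_neg (fun hh => hjK hh.2), if_pos (not_lt.1 hjK), zero_add]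
          exact mul_le_mul_right (WWaux_mono_insert q m S j) _
      · rw [if_neg hj]
        exact zero_le
    have hsum2 : (∑' j : ℕ, (if K ≤ j then q j else 0) * WWaux q m S)
        = U * WWaux q m S := ENNReal.tsum_mul_right
    have boundA : (∑' j : ℕ, if j ∉ S ∧ j < K then q j * WWaux q m (insert j S) else 0) * TK ^ m
        ≤ NNaux q K (m+1) S * ((TK + U) ^ m) := by
      rw [← ENNReal.tsum_mul_right]
      have : ∀ j : ℕ,
          (if j ∉ S ∧ j < K then q j * WWaux q m (insert j S) else 0) * TK ^ m
            ≤ (if j ∉ S ∧ j < K then q j * NNaux q K m (insert j S) else 0) * (TK + U) ^ m := by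
        intro j
        by_cases hj : j ∉ S ∧ j < K
        · rw [if_pos hj, if_pos hj, mul_assoc, mul_assoc]
          refine mul_le_mul_right ?_ _
          exact ih (insert j S) (by
            have := Finset.card_insert_le j S
            omega)
        · rw [if_neg hj, if_neg hj, zero_mul, zero_mul]
      refine le_trans (ENNReal.tsum_le_tsum this) ?_
      rw [ENNReal.tsum_mul_right, ← NNaux_succ]
    have boundB : (U * WWaux q m S) * TK ^ (m + 1)
        ≤ U * (NNaux q K (m+1) S * (TK + U) ^ m) := by
      calc (U * WWaux q m S) * TK ^ (m+1)
          = U * ((WWaux q m S * TK ^ m) * TK) := by ring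
        _ ≤ U * ((NNaux q K m S * (TK + U) ^ m) * TK) := by
            exact mul_le_mul_right (mul_le_mul_left (ih S (by omega)) _) _
        _ = U * ((TK * NNaux q K m S) * (TK + U) ^ m) := by ring
        _ ≤ U * (NNaux q K (m+1) S * (TK + U) ^ m) := by
            refine mul_le_mul_right (mul_le_mul_left ?_ _) _
            exact claim2 q hqa hqt a K m haK S (by omega)
    calc WWaux q (m+1) S * TK ^ (m+1)
        ≤ ((∑' j : ℕ, if j ∉ S ∧ j < K then q j * WWaux q m (insert j S) else 0)
            + U * WWaux q m S) * TK ^ (m+1) := by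
          rw [← hsum2]
          exact mul_le_mul_left step1 _
      _ = (∑' j : ℕ, if j ∉ S ∧ j < K then q j * WWaux q m (insert j S) else 0) * TK ^ m * TK
          + (U * WWaux q m S) * TK ^ (m+1) := by ring
      _ ≤ NNaux q K (m+1) S * (TK + U) ^ m * TK
          + U * (NNaux q K (m+1) S * (TK + U) ^ m) :=
          add_le_add (mul_le_mul_left boundA _) boundB
      _ = NNaux q K (m+1) S * (TK + U) ^ m * (TK + U) := by ring
      _ = NNaux q K (m+1) S * (TK + U) ^ (m+1) := by rw [mul_assoc, ← pow_succ]

open Classical in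
lemma tsum_subtype_toReal (p : ℕ → ℝ) (hp : ∀ j, 0 ≤ p j) {n : ℕ} (P : (Fin n → ℕ) → Prop) :
    (∑' v : {v : Fin n → ℕ // P v}, ∏ i, p (v.1 i))
      = (∑' v : Fin n → ℕ, if P v then ∏ i, ENNReal.ofReal (p (v i)) else 0).toReal := by
  have h1 : ∀ v : Fin n → ℕ, (if P v then ∏ i, ENNReal.ofReal (p (v i)) else 0)
      = Set.indicator {v | P v} (fun v => ENNReal.ofReal (∏ i, p (v i))) v := by
    intro v
    rw [Set.indicator_apply]
    by_cases h : P v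
    · rw [if_pos h, if_pos (show v ∈ {v | P v} from h),
        ← ENNReal.ofReal_prod_of_nonneg (fun i _ => hp _)]
    · rw [if_neg h, if_neg (show v ∉ {v | P v} from h)]
  rw [tsum_congr h1, ← tsum_subtype, ENNReal.tsum_toReal_eq (fun _ => ENNReal.ofReal_ne_top)]
  exact tsum_congr fun v =>
    (ENNReal.toReal_ofReal (Finset.prod_nonneg fun i _ => hp _)).symm

set_option maxHeartbeats 1000000 in
/-- Let `(p_j)` be a nonincreasing strictly positive probability vector,
`1 ≤ d ≤ K`, and `q` the law of `d` i.i.d. `Categorical(p)` draws conditioned to be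
pairwise distinct (with normalizer `W`).  Then the `q`-probability that all `d` sampled
indices lie among the first `K` is at least `((∑_{j=d}^K p_j)/(1 − ∑_{j=1}^{d−1} p_j))^d`.
(Indices are 0-based: `p j` represents `p_{j+1}`, so "index ≤ K" reads `v i < K`,
`∑_{j=d}^K p_j = ∑_{j ∈ [d−1, K)} p j` and `∑_{j=1}^{d−1} p_j = ∑_{j < d−1} p j`.) -/
theorem categorical_distinct_truncation_bound
    (p : ℕ → ℝ) (hpos : ∀ j, 0 < p j) (hmono : Antitone p)
    (hsum : Summable p) (hnorm : ∑' j, p j = 1)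
    (d K : ℕ) (hd : 1 ≤ d) (hdK : d ≤ K) :
    0 < (∑' v : {v : Fin d → ℕ // Function.Injective v}, ∏ i, p (v.1 i)) ∧
      ((∑ j ∈ Finset.Ico (d - 1) K, p j) / (1 - ∑ j ∈ Finset.range (d - 1), p j)) ^ d
        ≤ ∑' v : {v : Fin d → ℕ // Function.Injective v ∧ ∀ i, v i < K},
            (∏ i, p (v.1 i)) /
              ∑' w : {w : Fin d → ℕ // Function.Injective w}, ∏ i, p (w.1 i) := by
  have hp0 : ∀ j, 0 ≤ p j := fun j => (hpos j).le
  set q : ℕ → ℝ≥0∞ := fun j => ENNReal.ofReal (p j) with hqdef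
  have hq1 : ∑' j, q j = 1 := by
    rw [hqdef, ← ENNReal.ofReal_tsum_of_nonneg hp0 hsum, hnorm, ENNReal.ofReal_one]
  have hqa : Antitone q := fun a b h => ENNReal.ofReal_le_ofReal (hmono h)
  have hqt : ∀ j, q j ≠ ⊤ := fun j => ENNReal.ofReal_ne_top
  -- real quantities
  set A : ℝ := ∑ j ∈ Finset.Ico (d - 1) K, p j with hAdef
  set B : ℝ := ∑ j ∈ Finset.range (d - 1), p j with hBdef
  set Ur : ℝ := ∑' j, p (j + K) with hUrdef
  have hshift : ∀ k : ℕ, Summable fun n => p (n + k) :=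
    fun k => (summable_nat_add_iff k).2 hsum
  have hTr1 : B + ∑' j, p (j + (d - 1)) = 1 := by
    rw [hBdef, Summable.sum_add_tsum_nat_add (d - 1) hsum, hnorm]
  have hsplit : (∑' j, p (j + (d - 1))) = A + Ur := by
    have h0 := Summable.sum_add_tsum_nat_add' (f := fun n => p (n + (d - 1)))
      (k := K - (d - 1)) ((hshift (K - (d - 1) + (d - 1))).congr
        (fun n => show p (n + (K - (d - 1) + (d - 1))) = p (n + (K - (d - 1)) + (d - 1)) by
          congr 1; omega))
    rw [← h0]
    congr 1
    · rw [hAdef, Finset.sum_Ico_eq_sum_range]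
      exact Finset.sum_congr rfl fun i _ =>
        show p (i + (d - 1)) = p ((d - 1) + i) by rw [Nat.add_comm]
    · exact tsum_congr fun i =>
        show p (i + (K - (d - 1)) + (d - 1)) = p (i + K) by congr 1; omega
  have hApos : 0 < A :=
    Finset.sum_pos (fun j _ => hpos j) (Finset.nonempty_Ico.2 (by omega))
  have hUr0 : 0 ≤ Ur := tsum_nonneg fun j => hp0 _
  have hTreq : 1 - B = A + Ur := by rw [← hsplit]; linarith [hTr1]
  have hTrpos : 0 < 1 - B := by rw [hTreq]; linarith
  -- ENNReal quantities
  have hTKE : (∑ j ∈ Finset.Ico (d - 1) K, q j) = ENNReal.ofReal A :=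
    (ENNReal.ofReal_sum_of_nonneg fun i _ => hp0 i).symm
  have hUE : (∑' j : ℕ, if K ≤ j then q j else 0) = ENNReal.ofReal Ur := by
    have h1 : ∀ i ∈ Finset.range K, (if K ≤ i then q i else 0) = 0 := fun i hi =>
      if_neg (by rw [Finset.mem_range] at hi; omega)
    calc (∑' j : ℕ, if K ≤ j then q j else 0)
        = (∑ i ∈ Finset.range K, if K ≤ i then q i else 0)
            + ∑' i : ℕ, (if K ≤ i + K then q (i + K) else 0) :=
          (Summable.sum_add_tsum_nat_add' (k := K) ENNReal.summable).symm
      _ = ∑' i : ℕ, q (i + K) := by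
          rw [Finset.sum_eq_zero h1, zero_add]
          exact tsum_congr fun i => if_pos (Nat.le_add_left K i)
      _ = ENNReal.ofReal Ur := by
          rw [hUrdef, ENNReal.ofReal_tsum_of_nonneg (fun j => hp0 _) (hshift K)]
  have hTE : (∑ j ∈ Finset.Ico (d - 1) K, q j) + (∑' j : ℕ, if K ≤ j then q j else 0)
      = ENNReal.ofReal (1 - B) := by
    rw [hTKE, hUE, ← ENNReal.ofReal_add hApos.le hUr0, hTreq]
  -- main ENNReal inequality
  have hmain := mainind q hqa hqt hq1 (d - 1) K (by omega) d ∅ (by simp; omega)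
  rw [hTE] at hmain
  -- conversions between subtype tsums and aux quantities
  have hWcond : WWaux q d ∅
      = ∑' v : Fin d → ℕ, if Function.Injective v then ∏ i, q (v i) else 0 :=
    tsum_congr fun v =>
      if_congr (and_iff_left fun i => Finset.notMem_empty _) rfl rfl
  have hNcond : NNaux q K d ∅
      = ∑' v : Fin d → ℕ,
          if Function.Injective v ∧ ∀ i, v i < K then ∏ i, q (v i) else 0 :=
    tsum_congr fun v =>
      if_congr ⟨fun h => ⟨h.1, h.2.2⟩,
        fun h => ⟨h.1, fun i => Finset.notMem_empty _, h.2⟩⟩ rfl rfl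
  have hW_eq : (∑' v : {v : Fin d → ℕ // Function.Injective v}, ∏ i, p (v.1 i))
      = (WWaux q d ∅).toReal := by
    rw [tsum_subtype_toReal p hp0 (fun v => Function.Injective v), hWcond]
    exact congrArg ENNReal.toReal (tsum_congr fun v => by
      by_cases h : Function.Injective v
      · rw [if_pos h, if_pos h]
      · rw [if_neg h, if_neg h])
  have hN_eq : (∑' v : {v : Fin d → ℕ // Function.Injective v ∧ ∀ i, v i < K},
        ∏ i, p (v.1 i)) = (NNaux q K d ∅).toReal := by
    rw [tsum_subtype_toReal p hp0 (fun v => Function.Injective v ∧ ∀ i, v i < K), hNcond]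
    exact congrArg ENNReal.toReal (tsum_congr fun v => by
      by_cases h : Function.Injective v ∧ ∀ i, v i < K
      · rw [if_pos h, if_pos h]
      · rw [if_neg h, if_neg h])
  have hWne : WWaux q d ∅ ≠ ⊤ :=
    ((WWaux_le_one q hq1 d ∅).trans_lt ENNReal.one_lt_top).ne
  have hNle : NNaux q K d ∅ ≤ WWaux q d ∅ := by
    refine ENNReal.tsum_le_tsum fun v => ?_
    by_cases h : Function.Injective v ∧ (∀ i, v i ∉ (∅ : Finset ℕ)) ∧ ∀ i, v i < K
    · rw [if_pos h, if_pos ⟨h.1, h.2.1⟩]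
    · rw [if_neg h]; exact zero_le
  have hNne : NNaux q K d ∅ ≠ ⊤ := (hNle.trans_lt hWne.lt_top).ne
  have hWpos : 0 < WWaux q d ∅ := by
    rw [hWcond]
    refine lt_of_lt_of_le ?_ (ENNReal.le_tsum (fun i : Fin d => (i : ℕ)))
    rw [if_pos Fin.val_injective]
    exact CanonicallyOrderedAdd.prod_pos.2
      fun i _ => ENNReal.ofReal_pos.2 (hpos _)
  have hWrpos : 0 < (WWaux q d ∅).toReal := ENNReal.toReal_pos hWpos.ne' hWne
  constructor
  · rw [hW_eq]; exact hWrpos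
  · rw [tsum_div_const, hW_eq, hN_eq]
    have hR : (WWaux q d ∅).toReal * A ^ d ≤ (NNaux q K d ∅).toReal * (1 - B) ^ d := by
      have h2 := (ENNReal.toReal_le_toReal
        (ENNReal.mul_ne_top hWne (ENNReal.pow_ne_top (hTKE ▸ ENNReal.ofReal_ne_top)))
        (ENNReal.mul_ne_top hNne (ENNReal.pow_ne_top ENNReal.ofReal_ne_top))).2 hmain
      rw [ENNReal.toReal_mul, ENNReal.toReal_mul, ENNReal.toReal_pow, ENNReal.toReal_pow,
        hTKE, ENNReal.toReal_ofReal hApos.le, ENNReal.toReal_ofReal hTrpos.le] at h2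
      exact h2
    rw [div_pow, div_le_div_iff₀ (by positivity) hWrpos]
    calc A ^ d * (WWaux q d ∅).toReal = (WWaux q d ∅).toReal * A ^ d := by ring
      _ ≤ (NNaux q K d ∅).toReal * (1 - B) ^ d := hR
end

section
/- Under hypotheses (i)–(iii), the total variation distance between Π̂ and Π satisfies (1/2)·∫ |p(x)/Z − p̂(x)/Ẑ| μ₀(dx) ≤ 3(ε + η)/2 − ε·η. -/
open MeasureTheory

/-- (Paper's Theorem 4.2.)  Under (i) `p ≤ p̂` a.e.,
(ii) `(1−ε)·p̂ ≤ p` a.e. on `A`, and (iii) `∫_A p̂ ≥ (1−η)·Ẑ`, the total variation distance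
between the truncated posterior `Π̂` (density `p̂/Ẑ`) and the exact posterior `Π`
(density `p/Z`) satisfies `(1/2)∫|p/Z − p̂/Ẑ| dμ₀ ≤ 3(ε+η)/2 − εη`. -/
theorem truncated_posterior_tv_bound
    {X : Type*} [MeasurableSpace X] (μ₀ : Measure X)
    (p phat : X → ℝ) (hp : Measurable p) (hphat : Measurable phat)
    (hp0 : ∀ x, 0 ≤ p x) (hphat0 : ∀ x, 0 ≤ phat x)
    (hpInt : Integrable p μ₀) (hphatInt : Integrable phat μ₀)
    (hZpos : 0 < ∫ x, p x ∂μ₀) (hZhatpos : 0 < ∫ x, phat x ∂μ₀)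
    (ε η : ℝ) (hε : 0 ≤ ε) (hε1 : ε < 1) (hη : 0 ≤ η) (hη1 : η < 1)
    (A : Set X) (hA : MeasurableSet A)
    (h1 : ∀ᵐ x ∂μ₀, p x ≤ phat x)
    (h2 : ∀ᵐ x ∂μ₀, x ∈ A → (1 - ε) * phat x ≤ p x)
    (h3 : (1 - η) * ∫ x, phat x ∂μ₀ ≤ ∫ x in A, phat x ∂μ₀) :
    (1 / 2) * ∫ x, |p x / (∫ y, p y ∂μ₀) - phat x / (∫ y, phat y ∂μ₀)| ∂μ₀
      ≤ 3 * (ε + η) / 2 - ε * η := by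
  set Z := ∫ y, p y ∂μ₀ with hZdef
  set Zh := ∫ y, phat y ∂μ₀ with hZhdef
  have hZleZh : Z ≤ Zh := integral_mono_ae hpInt hphatInt h1
  have hsubInt : Integrable (fun x => phat x - p x) μ₀ := hphatInt.sub hpInt
  -- lower bound on Z
  have hZlb : (1 - ε) * ((1 - η) * Zh) ≤ Z := by
    have hAp : ∫ x in A, p x ∂μ₀ ≤ Z :=
      setIntegral_le_integral hpInt (Filter.Eventually.of_forall fun x => hp0 x)
    have h4 : (1 - ε) * ∫ x in A, phat x ∂μ₀ ≤ ∫ x in A, p x ∂μ₀ := by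
      rw [← integral_const_mul]
      exact integral_mono_ae ((hphatInt.restrict).const_mul _) hpInt.restrict
        ((ae_restrict_iff' hA).2 h2)
    have h5 : (1 - ε) * ((1 - η) * Zh) ≤ (1 - ε) * ∫ x in A, phat x ∂μ₀ :=
      mul_le_mul_of_nonneg_left h3 (by linarith)
    linarith
  have hc : (1:ℝ)/Zh ≤ 1/Z := one_div_le_one_div_of_le hZpos hZleZh
  have hfInt : Integrable (fun x => |p x / Z - phat x / Zh|) μ₀ :=
    ((hpInt.div_const Z).sub (hphatInt.div_const Zh)).abs
  have hgInt : Integrable (fun x => p x * (1/Z - 1/Zh) + (phat x - p x) * (1/Zh)) μ₀ :=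
    (hpInt.mul_const _).add (hsubInt.mul_const _)
  have hptw : ∀ᵐ x ∂μ₀, |p x / Z - phat x / Zh|
      ≤ p x * (1/Z - 1/Zh) + (phat x - p x) * (1/Zh) := by
    filter_upwards [h1] with x hx
    have h0 := hp0 x
    have hZ := hZpos
    have hZh := hZhatpos
    have e1 : p x / Z - phat x / Zh = p x * (1/Z - 1/Zh) - (phat x - p x) * (1/Zh) := by
      field_simp
      ring
    have ha : 0 ≤ p x * (1/Z - 1/Zh) := mul_nonneg h0 (by linarith)
    have hb : 0 ≤ (phat x - p x) * (1/Zh) := mul_nonneg (by linarith) (by positivity)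
    rw [e1, abs_le]
    constructor <;> linarith
  have hIle : ∫ x, |p x / Z - phat x / Zh| ∂μ₀
      ≤ ∫ x, (p x * (1/Z - 1/Zh) + (phat x - p x) * (1/Zh)) ∂μ₀ :=
    integral_mono_ae hfInt hgInt hptw
  have hIg : ∫ x, (p x * (1/Z - 1/Zh) + (phat x - p x) * (1/Zh)) ∂μ₀
      = Z * (1/Z - 1/Zh) + (Zh - Z) * (1/Zh) := by
    rw [integral_add (hpInt.mul_const _) (hsubInt.mul_const _),
      integral_mul_const, integral_mul_const, integral_sub hphatInt hpInt]
  have hratio : (1 - ε) * (1 - η) ≤ Z / Zh := by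
    rw [le_div_iff₀ hZhatpos]
    linarith
  have hkey : Z * (1/Z - 1/Zh) + (Zh - Z) * (1/Zh) = 2 * (1 - Z / Zh) := by
    field_simp
    ring
  have hfinal : 1 - Z / Zh ≤ ε + η - ε * η := by nlinarith
  rw [hIg, hkey] at hIle
  linarith
end

section
/- Under hypotheses (i)–(iii), the exact posterior mass of A satisfies Π(A) = (∫_A p dμ₀)/Z ≥ (1−ε)·(1−η). -/
open MeasureTheory

/-- Under (i) `p ≤ p̂` a.e., (ii) `(1−ε)·p̂ ≤ p` a.e. on `A`, and
(iii) `∫_A p̂ ≥ (1−η)·Ẑ`, the exact posterior mass of `A` satisfies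
`Π(A) = (∫_A p dμ₀)/Z ≥ (1−ε)(1−η)`. -/
theorem truncated_posterior_mass_of_good_set
    {X : Type*} [MeasurableSpace X] (μ₀ : Measure X)
    (p phat : X → ℝ) (hp : Measurable p) (hphat : Measurable phat)
    (hp0 : ∀ x, 0 ≤ p x) (hphat0 : ∀ x, 0 ≤ phat x)
    (hpInt : Integrable p μ₀) (hphatInt : Integrable phat μ₀)
    (hZpos : 0 < ∫ x, p x ∂μ₀) (hZhatpos : 0 < ∫ x, phat x ∂μ₀)
    (ε η : ℝ) (hε : 0 ≤ ε) (hε1 : ε < 1) (hη : 0 ≤ η) (hη1 : η < 1)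
    (A : Set X) (hA : MeasurableSet A)
    (h1 : ∀ᵐ x ∂μ₀, p x ≤ phat x)
    (h2 : ∀ᵐ x ∂μ₀, x ∈ A → (1 - ε) * phat x ≤ p x)
    (h3 : (1 - η) * ∫ x, phat x ∂μ₀ ≤ ∫ x in A, phat x ∂μ₀) :
    (1 - ε) * (1 - η) ≤ (∫ x in A, p x ∂μ₀) / ∫ x, p x ∂μ₀ := by
  have hZleZhat : ∫ x, p x ∂μ₀ ≤ ∫ x, phat x ∂μ₀ :=
    integral_mono_ae hpInt hphatInt h1
  have hApA : (1 - ε) * ∫ x in A, phat x ∂μ₀ ≤ ∫ x in A, p x ∂μ₀ := by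
    rw [← MeasureTheory.integral_const_mul]
    refine integral_mono_ae (hphatInt.restrict.const_mul _) hpInt.restrict ?_
    rw [Filter.EventuallyLE, ae_restrict_iff' hA]
    filter_upwards [h2] with x hx hxA using hx hxA
  rw [le_div_iff₀ hZpos]
  calc (1 - ε) * (1 - η) * ∫ x, p x ∂μ₀
      ≤ (1 - ε) * ((1 - η) * ∫ x, phat x ∂μ₀) := by
        rw [mul_assoc]
        gcongr <;> nlinarith
    _ ≤ (1 - ε) * ∫ x in A, phat x ∂μ₀ := by gcongr
    _ ≤ ∫ x in A, p x ∂μ₀ := hApA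
end

section
/- Define τ(u, γ) = μ←(γ) if (dν/dμ)(μ←(γ)) ≥ u and τ(u, γ) = 0 otherwise, and let F_K(t) = ∫_0^{max(t,0)} s^{K−1} e^{−s} / Γ(K) ds denote the Gamma(K,1) cumulative distribution function. Then, as an identity in [0,∞], ∫_0^∞ (t^{K−1} e^{−t} / Γ(K)) · (∫_t^∞ ∫_t^∞ ∫_0^1 ∫_0^1 −log π(τ(u_1, γ_1)·τ(u_2, γ_2)) du_1 du_2 dγ_1 dγ_2) dt = ∫_{(0,∞)} ∫_{(0,∞)} −log π(x_1·x_2) · F_K(μ([max(x_1, x_2), ∞))) ν(dx_1) ν(dx_2). -/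
open MeasureTheory Set
open scoped ENNReal

namespace RTCV

lemma iUnion_Ici_one_div : (⋃ n : ℕ, Ici (1 / ((n:ℝ) + 1))) = Ioi (0:ℝ) := by
  ext x
  simp only [mem_iUnion, mem_Ici, mem_Ioi]
  constructor
  · rintro ⟨n, hn⟩
    exact lt_of_lt_of_le (by positivity) hn
  · intro hx
    obtain ⟨n, hn⟩ := exists_nat_one_div_lt hx
    exact ⟨n, hn.le⟩

lemma iInter_Ici_add : (⋂ n : ℕ, Ici ((n : ℝ) + 1)) = (∅ : Set ℝ) := by
  ext x
  simp only [mem_iInter, mem_Ici, mem_empty_iff_false, iff_false]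
  push_neg
  obtain ⟨n, hn⟩ := exists_nat_gt x
  exact ⟨n, by linarith⟩

lemma iUnion_Ici_add (a : ℝ) : (⋃ n : ℕ, Ici (a + 1 / ((n:ℝ) + 1))) = Ioi a := by
  ext x
  simp only [mem_iUnion, mem_Ici, mem_Ioi]
  constructor
  · rintro ⟨n, hn⟩
    have : (0:ℝ) < 1 / ((n:ℝ)+1) := by positivity
    linarith
  · intro hx
    obtain ⟨n, hn⟩ := exists_nat_one_div_lt (sub_pos.2 hx)
    exact ⟨n, by linarith⟩

lemma iInter_Ici_sub (a : ℝ) : (⋂ n : ℕ, Ici (a - 1 / ((n:ℝ) + 1))) = Ici a := by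
  ext x
  simp only [mem_iInter, mem_Ici]
  constructor
  · intro h
    by_contra hx
    push_neg at hx
    obtain ⟨n, hn⟩ := exists_nat_one_div_lt (sub_pos.2 hx)
    have := h n
    linarith
  · intro h n
    have : (0:ℝ) < 1 / ((n:ℝ)+1) := by positivity
    linarith

variable {μ : Measure ℝ} {μinv : ℝ → ℝ}

lemma S_bddBelow (γ : ℝ) :
    BddBelow {y : ℝ | 0 < y ∧ μ (Set.Ici y) ≤ ENNReal.ofReal γ} :=
  ⟨0, fun y hy => hy.1.le⟩

lemma S_nonempty (hμ_tail : ∀ y : ℝ, 0 < y → μ (Set.Ici y) < ⊤)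
    {γ : ℝ} (hγ : 0 < γ) :
    {y : ℝ | 0 < y ∧ μ (Set.Ici y) ≤ ENNReal.ofReal γ}.Nonempty := by
  have hanti : Antitone (fun n : ℕ => Ici ((n : ℝ) + 1)) := by
    intro n m hnm
    exact Ici_subset_Ici.2 (by exact_mod_cast add_le_add_left (Nat.cast_le.2 hnm) 1)
  have h := hanti.measure_iInter (μ := μ)
    (fun n => measurableSet_Ici.nullMeasurableSet)
    ⟨0, (hμ_tail _ (by norm_num)).ne⟩
  rw [iInter_Ici_add] at h
  have h0 : (⨅ n : ℕ, μ (Ici ((n:ℝ) + 1))) = 0 := by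
    rw [← h]; exact measure_empty
  have : (⨅ n : ℕ, μ (Ici ((n:ℝ) + 1))) < ENNReal.ofReal γ := by
    rw [h0]; exact ENNReal.ofReal_pos.2 hγ
  obtain ⟨n, hn⟩ := iInf_lt_iff.1 this
  exact ⟨(n:ℝ) + 1, by positivity, hn.le⟩

lemma exists_pos_lower (hμ_inf : μ (Set.Ioi 0) = ⊤) {γ : ℝ} :
    ∃ z : ℝ, 0 < z ∧ ENNReal.ofReal γ < μ (Ici z) := by
  have hmono : Monotone (fun n : ℕ => Ici (1 / ((n:ℝ) + 1))) := by
    intro n m hnm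
    apply Ici_subset_Ici.2
    apply one_div_le_one_div_of_le (by positivity)
    exact_mod_cast add_le_add_left (Nat.cast_le.2 hnm) 1
  have h := hmono.measure_iUnion (μ := μ)
  rw [iUnion_Ici_one_div, hμ_inf] at h
  have : ENNReal.ofReal γ < ⨆ n : ℕ, μ (Ici (1 / ((n:ℝ) + 1))) := by
    rw [← h]; exact ENNReal.ofReal_lt_top
  obtain ⟨n, hn⟩ := lt_iSup_iff.1 this
  exact ⟨1 / ((n:ℝ) + 1), by positivity, hn⟩

lemma μinv_pos
    (hμ_inf : μ (Set.Ioi 0) = ⊤) (hμ_tail : ∀ y : ℝ, 0 < y → μ (Set.Ici y) < ⊤)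
    (hμinv : ∀ x : ℝ, μinv x = sInf {y : ℝ | 0 < y ∧ μ (Set.Ici y) ≤ ENNReal.ofReal x})
    {γ : ℝ} (hγ : 0 < γ) : 0 < μinv γ := by
  obtain ⟨z, hz, hzγ⟩ := exists_pos_lower hμ_inf (γ := γ)
  rw [hμinv]
  refine lt_of_lt_of_le hz (le_csInf (S_nonempty hμ_tail hγ) ?_)
  intro y hy
  by_contra hyz
  push_neg at hyz
  exact absurd (le_trans (measure_mono (Ici_subset_Ici.2 hyz.le)) hy.2) (not_le.2 hzγ)

lemma tail_μinv
    (hμ_atomless : ∀ x : ℝ, μ {x} = 0)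
    (hμ_inf : μ (Set.Ioi 0) = ⊤) (hμ_tail : ∀ y : ℝ, 0 < y → μ (Set.Ici y) < ⊤)
    (hμinv : ∀ x : ℝ, μinv x = sInf {y : ℝ | 0 < y ∧ μ (Set.Ici y) ≤ ENNReal.ofReal x})
    {γ : ℝ} (hγ : 0 < γ) : μ (Set.Ici (μinv γ)) = ENNReal.ofReal γ := by
  set S := {y : ℝ | 0 < y ∧ μ (Set.Ici y) ≤ ENNReal.ofReal γ} with hS
  have hSne : S.Nonempty := S_nonempty hμ_tail hγ
  have ha : μinv γ = sInf S := hμinv γ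
  have hapos : 0 < μinv γ := μinv_pos hμ_inf hμ_tail hμinv hγ
  apply le_antisymm
  · -- μ (Ici a) ≤ ofReal γ
    have hIoi : μ (Ioi (μinv γ)) ≤ ENNReal.ofReal γ := by
      rw [← iUnion_Ici_add (μinv γ)]
      have hmono : Monotone (fun n : ℕ => Ici (μinv γ + 1 / ((n:ℝ) + 1))) := by
        intro n m hnm
        apply Ici_subset_Ici.2
        have : 1 / ((m:ℝ) + 1) ≤ 1 / ((n:ℝ)+1) := by
          apply one_div_le_one_div_of_le (by positivity)
          exact_mod_cast add_le_add_left (Nat.cast_le.2 hnm) 1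
        linarith
      rw [hmono.measure_iUnion]
      apply iSup_le
      intro n
      have hlt : sInf S < μinv γ + 1 / ((n:ℝ) + 1) := by
        rw [← ha]
        have hp : (0:ℝ) < 1 / ((n:ℝ)+1) := by positivity
        linarith
      obtain ⟨z, hzS, hz⟩ := exists_lt_of_csInf_lt hSne hlt
      exact le_trans (measure_mono (Ici_subset_Ici.2 hz.le)) hzS.2
    calc μ (Set.Ici (μinv γ)) ≤ μ ({μinv γ} ∪ Ioi (μinv γ)) := by
          apply measure_mono
          intro x hx
          rcases eq_or_lt_of_le (mem_Ici.1 hx) with h | h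
          · exact Or.inl (by simp [h.symm])
          · exact Or.inr h
      _ ≤ μ {μinv γ} + μ (Ioi (μinv γ)) := measure_union_le _ _
      _ ≤ ENNReal.ofReal γ := by rw [hμ_atomless, zero_add]; exact hIoi
  · -- ofReal γ ≤ μ (Ici a)
    rw [← iInter_Ici_sub (μinv γ)]
    have hanti : Antitone (fun n : ℕ => Ici (μinv γ - 1 / ((n:ℝ) + 1))) := by
      intro n m hnm
      apply Ici_subset_Ici.2
      have : 1 / ((m:ℝ) + 1) ≤ 1 / ((n:ℝ)+1) := by
        apply one_div_le_one_div_of_le (by positivity)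
        exact_mod_cast add_le_add_left (Nat.cast_le.2 hnm) 1
      linarith
    obtain ⟨n0, hn0⟩ := exists_nat_one_div_lt hapos
    have hfin : μ (Ici (μinv γ - 1 / ((n0:ℝ) + 1))) ≠ ⊤ :=
      (hμ_tail _ (by linarith)).ne
    rw [hanti.measure_iInter (fun n => measurableSet_Ici.nullMeasurableSet) ⟨n0, hfin⟩]
    apply le_iInf
    intro n
    rcases le_or_gt (μinv γ - 1 / ((n:ℝ) + 1)) 0 with h | h
    · refine le_trans ?_ (measure_mono (Set.Ioi_subset_Ici_self.trans (Ici_subset_Ici.2 h)))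
      rw [hμ_inf]; exact le_top
    · -- z := μinv γ - 1/(n+1) is positive and < sInf S, hence z ∉ S
      by_contra hcon
      push_neg at hcon
      have hzS : (μinv γ - 1 / ((n:ℝ) + 1)) ∈ S := ⟨h, hcon.le⟩
      have := csInf_le (S_bddBelow γ) hzS
      rw [← ha] at this
      have hpos : (0:ℝ) < 1 / ((n:ℝ)+1) := by positivity
      linarith

lemma lt_μinv_iff
    (hμ_atomless : ∀ x : ℝ, μ {x} = 0)
    (hμ_inf : μ (Set.Ioi 0) = ⊤) (hμ_tail : ∀ y : ℝ, 0 < y → μ (Set.Ici y) < ⊤)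
    (hμinv : ∀ x : ℝ, μinv x = sInf {y : ℝ | 0 < y ∧ μ (Set.Ici y) ≤ ENNReal.ofReal x})
    {γ : ℝ} (hγ : 0 < γ) (x : ℝ) :
    x < μinv γ ↔ ENNReal.ofReal γ < μ (Set.Ici x) := by
  constructor
  · intro hx
    rcases le_or_gt x 0 with h | h
    · refine lt_of_lt_of_le ENNReal.ofReal_lt_top ?_
      rw [← hμ_inf]
      exact measure_mono (Set.Ioi_subset_Ici_self.trans (Ici_subset_Ici.2 h))
    · by_contra hcon
      push_neg at hcon
      have hxS : x ∈ {y : ℝ | 0 < y ∧ μ (Set.Ici y) ≤ ENNReal.ofReal γ} := ⟨h, hcon⟩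
      have := csInf_le (S_bddBelow γ) hxS
      rw [← hμinv] at this
      linarith
  · intro hx
    by_contra hcon
    push_neg at hcon
    have := le_trans (measure_mono (Ici_subset_Ici.2 hcon))
      (tail_μinv hμ_atomless hμ_inf hμ_tail hμinv hγ).le
    exact absurd this (not_le.2 hx)

lemma μinv_anti
    (hμ_tail : ∀ y : ℝ, 0 < y → μ (Set.Ici y) < ⊤)
    (hμinv : ∀ x : ℝ, μinv x = sInf {y : ℝ | 0 < y ∧ μ (Set.Ici y) ≤ ENNReal.ofReal x})
    {s s' : ℝ} (hs : 0 < s) (h : s ≤ s') : μinv s' ≤ μinv s := by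
  rw [hμinv, hμinv]
  exact csInf_le_csInf (S_bddBelow s') (S_nonempty hμ_tail hs)
    (fun y hy => ⟨hy.1, le_trans hy.2 (ENNReal.ofReal_le_ofReal h)⟩)
lemma map_eq
    (hμ_atomless : ∀ x : ℝ, μ {x} = 0) (hμ_supp : μ (Set.Iic 0) = 0)
    (hμ_inf : μ (Set.Ioi 0) = ⊤) (hμ_tail : ∀ y : ℝ, 0 < y → μ (Set.Ici y) < ⊤)
    (hμinv : ∀ x : ℝ, μinv x = sInf {y : ℝ | 0 < y ∧ μ (Set.Ici y) ≤ ENNReal.ofReal x})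
    {t : ℝ} (ht : 0 < t) :
    Measure.map (fun γ => μinv (max γ t)) (volume.restrict (Set.Ioi t))
      = μ.restrict (Set.Iio (μinv t)) := by
  set g : ℝ → ℝ := fun γ => μinv (max γ t) with hgdef
  have hganti : Antitone g := fun γ γ' hγ =>
    μinv_anti hμ_tail hμinv (lt_of_lt_of_le ht (le_max_right γ t)) (max_le_max hγ le_rfl)
  have hgmeas : Measurable g := hganti.measurable
  set ρ := Measure.map g (volume.restrict (Set.Ioi t)) with hρ
  have key : ∀ y : ℝ, 0 < y → ρ (Ici y) = μ.restrict (Iio (μinv t)) (Ici y) := by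
    intro y hy
    have hTy : μ (Ici y) ≠ ⊤ := (hμ_tail y hy).ne
    set m : ℝ := (μ (Ici y)).toReal with hm
    have hpre : g ⁻¹' (Ici y) ∩ Ioi t = {γ | t < γ ∧ y ≤ μinv γ} := by
      ext γ
      simp only [mem_inter_iff, mem_preimage, mem_Ici, mem_Ioi, mem_setOf_eq, hgdef]
      constructor
      · rintro ⟨h1, h2⟩
        rw [max_eq_left h2.le] at h1
        exact ⟨h2, h1⟩
      · rintro ⟨h1, h2⟩
        rw [max_eq_left h1.le]
        exact ⟨h2, h1⟩
    have hsub1 : Ioo t m ⊆ {γ | t < γ ∧ y ≤ μinv γ} := by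
      rintro γ ⟨h1, h2⟩
      refine ⟨h1, ?_⟩
      have hγpos : 0 < γ := lt_trans ht h1
      have hlt : ENNReal.ofReal γ < μ (Ici y) :=
        (ENNReal.ofReal_lt_iff_lt_toReal hγpos.le hTy).2 h2
      rw [hμinv]
      apply le_csInf (S_nonempty hμ_tail hγpos)
      intro z hz
      by_contra hzy
      push_neg at hzy
      exact absurd (le_trans (measure_mono (Ici_subset_Ici.2 hzy.le)) hz.2)
        (not_le.2 hlt)
    have hsub2 : {γ | t < γ ∧ y ≤ μinv γ} ⊆ Ioc t m := by
      rintro γ ⟨h1, h2⟩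
      have hγpos : 0 < γ := lt_trans ht h1
      have hle : ENNReal.ofReal γ ≤ μ (Ici y) := by
        rw [← tail_μinv hμ_atomless hμ_inf hμ_tail hμinv hγpos]
        exact measure_mono (Ici_subset_Ici.2 h2)
      refine ⟨h1, ?_⟩
      have := ENNReal.toReal_mono hTy hle
      rwa [ENNReal.toReal_ofReal hγpos.le] at this
    have hρy : ρ (Ici y) = ENNReal.ofReal (m - t) := by
      rw [hρ, Measure.map_apply hgmeas measurableSet_Ici,
        Measure.restrict_apply (hgmeas measurableSet_Ici), hpre]
      apply le_antisymm
      · exact le_trans (measure_mono hsub2) (le_of_eq Real.volume_Ioc)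
      · exact le_trans (le_of_eq Real.volume_Ioo.symm) (measure_mono hsub1)
    rw [hρy, Measure.restrict_apply measurableSet_Ici, Ici_inter_Iio]
    rcases lt_or_ge y (μinv t) with hc | hc
    · have hty : ENNReal.ofReal t < μ (Ici y) :=
        (lt_μinv_iff hμ_atomless hμ_inf hμ_tail hμinv ht y).1 hc
      have hdisj : Disjoint (Ico y (μinv t)) (Ici (μinv t)) := by
        rw [Set.disjoint_left]
        rintro x ⟨_, hx2⟩ hx3
        exact absurd hx3 (not_le.2 hx2)
      have hunion : μ (Ico y (μinv t)) + μ (Ici (μinv t)) = μ (Ici y) := by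
        rw [← measure_union hdisj measurableSet_Ici, Ico_union_Ici_eq_Ici hc.le]
      rw [tail_μinv hμ_atomless hμ_inf hμ_tail hμinv ht] at hunion
      have := ENNReal.eq_sub_of_add_eq ENNReal.ofReal_ne_top hunion
      rw [this, ← ENNReal.ofReal_toReal hTy, ← hm,
        ← ENNReal.ofReal_sub _ ht.le]
    · rw [Ico_eq_empty (not_lt.2 hc), measure_empty]
      have hty : μ (Ici y) ≤ ENNReal.ofReal t := by
        by_contra hcon
        push_neg at hcon
        exact absurd ((lt_μinv_iff hμ_atomless hμ_inf hμ_tail hμinv ht y).2 hcon)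
          (not_lt.2 hc)
      have hmt : m ≤ t := by
        have := ENNReal.toReal_mono ENNReal.ofReal_ne_top hty
        rwa [ENNReal.toReal_ofReal ht.le] at this
      rw [ENNReal.ofReal_eq_zero.2 (sub_nonpos.2 hmt)]
  -- extend to all measurable sets
  have hρ0 : ρ (Iic 0) = 0 := by
    rw [hρ, Measure.map_apply hgmeas measurableSet_Iic,
      Measure.restrict_apply (hgmeas measurableSet_Iic)]
    convert measure_empty (μ := volume)
    ext γ
    simp only [mem_inter_iff, mem_preimage, mem_Iic, mem_Ioi, mem_empty_iff_false,
      iff_false, not_and, hgdef]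
    intro h1 h2
    exact absurd h1 (not_le.2 (μinv_pos hμ_inf hμ_tail hμinv
      (lt_of_lt_of_le ht (le_max_right γ t))))
  have hμr0 : μ.restrict (Iio (μinv t)) (Iic 0) = 0 :=
    le_antisymm (le_trans (Measure.restrict_apply_le _ _) hμ_supp.le) zero_le
  have key' : ∀ ε : ℝ, 0 < ε →
      ρ.restrict (Ici ε) = (μ.restrict (Iio (μinv t))).restrict (Ici ε) := by
    intro ε hε
    haveI : IsFiniteMeasure (ρ.restrict (Ici ε)) := by
      constructor
      rw [Measure.restrict_apply_univ, key ε hε]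
      exact lt_of_le_of_lt (Measure.restrict_apply_le _ _) (hμ_tail ε hε)
    apply Measure.ext_of_Ici
    intro a
    rw [Measure.restrict_apply measurableSet_Ici,
      Measure.restrict_apply measurableSet_Ici, Ici_inter_Ici,
      key _ (lt_of_lt_of_le hε (le_max_right a ε))]
  ext s hs
  have hsplit : ∀ σ : Measure ℝ, σ (Iic 0) = 0 →
      σ s = ⨆ n : ℕ, σ (s ∩ Ici (1 / ((n:ℝ) + 1))) := by
    intro σ h0
    have h1 : σ s = σ (s ∩ Iic 0) + σ (s ∩ Ioi 0) := by
      have hd : s \ Iic 0 = s ∩ Ioi 0 := by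
        ext x; simp [mem_diff, not_le]
      rw [← measure_inter_add_diff s measurableSet_Iic, hd]
    have h2 : σ (s ∩ Iic 0) = 0 :=
      le_antisymm (le_trans (measure_mono inter_subset_right) h0.le) zero_le
    have h3 : s ∩ Ioi 0 = ⋃ n : ℕ, s ∩ Ici (1 / ((n:ℝ) + 1)) := by
      rw [← iUnion_Ici_one_div, inter_iUnion]
    have hmono : Monotone (fun n : ℕ => s ∩ Ici (1 / ((n:ℝ) + 1))) := by
      intro n m hnm
      apply inter_subset_inter_right
      apply Ici_subset_Ici.2
      apply one_div_le_one_div_of_le (by positivity)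
      exact_mod_cast add_le_add_left (Nat.cast_le.2 hnm) 1
    rw [h1, h2, zero_add, h3, hmono.measure_iUnion]
  rw [hsplit ρ hρ0, hsplit _ hμr0]
  refine iSup_congr fun n => ?_
  calc ρ (s ∩ Ici (1 / ((n:ℝ) + 1)))
      = ρ.restrict (Ici (1 / ((n:ℝ) + 1))) s := (Measure.restrict_apply hs).symm
    _ = (μ.restrict (Iio (μinv t))).restrict (Ici (1 / ((n:ℝ) + 1))) s := by
        rw [key' _ (by positivity)]
    _ = μ.restrict (Iio (μinv t)) (s ∩ Ici (1 / ((n:ℝ) + 1))) :=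
        Measure.restrict_apply hs

lemma lintegral_μinv
    (hμ_atomless : ∀ x : ℝ, μ {x} = 0) (hμ_supp : μ (Set.Iic 0) = 0)
    (hμ_inf : μ (Set.Ioi 0) = ⊤) (hμ_tail : ∀ y : ℝ, 0 < y → μ (Set.Ici y) < ⊤)
    (hμinv : ∀ x : ℝ, μinv x = sInf {y : ℝ | 0 < y ∧ μ (Set.Ici y) ≤ ENNReal.ofReal x})
    {t : ℝ} (ht : 0 < t) {f : ℝ → ℝ≥0∞} (hf : Measurable f) :
    (∫⁻ γ in Set.Ioi t, f (μinv γ)) = ∫⁻ x in Set.Iio (μinv t), f x ∂μ := by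
  have hganti : Antitone (fun γ => μinv (max γ t)) := fun γ γ' hγ =>
    μinv_anti hμ_tail hμinv (lt_of_lt_of_le ht (le_max_right γ t)) (max_le_max hγ le_rfl)
  have h1 : (∫⁻ γ in Set.Ioi t, f (μinv γ)) = ∫⁻ γ in Set.Ioi t, f (μinv (max γ t)) :=
    setLIntegral_congr_fun measurableSet_Ioi
      (fun γ hγ => by rw [max_eq_left (le_of_lt hγ)])
  rw [h1, ← lintegral_map hf hganti.measurable,
    map_eq hμ_atomless hμ_supp hμ_inf hμ_tail hμinv ht]
lemma lintegral_if_le (C : ℝ≥0∞) {e : ℝ} (he1 : e ≤ 1) :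
    (∫⁻ u in Icc (0:ℝ) 1, if u ≤ e then C else 0) = C * ENNReal.ofReal e := by
  have h1 : (fun u : ℝ => if u ≤ e then C else 0) = (Iic e).indicator (fun _ => C) := by
    funext u; by_cases h : u ≤ e <;> simp [Set.indicator, h]
  rw [h1, lintegral_indicator measurableSet_Iic, Measure.restrict_restrict measurableSet_Iic]
  have h2 : Iic e ∩ Icc (0:ℝ) 1 = Icc 0 e := by
    ext u
    simp only [mem_inter_iff, mem_Iic, mem_Icc]
    exact ⟨fun ⟨ha, hb, _⟩ => ⟨hb, ha⟩, fun ⟨ha, hb⟩ => ⟨hb, ha, hb.trans he1⟩⟩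
  rw [h2, setLIntegral_const, Real.volume_Icc, sub_zero]

lemma quad_eval (π : ℝ → ℝ) (hπ0 : π 0 = 1) {d1 d2 : ℝ}
    (h1' : d1 ≤ 1) (h2 : 0 ≤ d2) (h2' : d2 ≤ 1) (a b : ℝ) :
    (∫⁻ u2 in Icc (0:ℝ) 1, ∫⁻ u1 in Icc (0:ℝ) 1,
        ENNReal.ofReal (-Real.log (π ((if u1 ≤ d1 then a else 0) *
          (if u2 ≤ d2 then b else 0))))) =
      ENNReal.ofReal d1 * (ENNReal.ofReal d2 *
        ENNReal.ofReal (-Real.log (π (a * b)))) := by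
  have hzero : ENNReal.ofReal (-Real.log (π 0)) = 0 := by
    rw [hπ0, Real.log_one, neg_zero, ENNReal.ofReal_zero]
  have hinner : ∀ u2 : ℝ,
      (∫⁻ u1 in Icc (0:ℝ) 1, ENNReal.ofReal (-Real.log (π ((if u1 ≤ d1 then a else 0) *
        (if u2 ≤ d2 then b else 0))))) =
      if u2 ≤ d2 then ENNReal.ofReal (-Real.log (π (a * b))) * ENNReal.ofReal d1 else 0 := by
    intro u2
    by_cases hu2 : u2 ≤ d2
    · simp only [if_pos hu2]
      have heq : ∀ u1 : ℝ, ENNReal.ofReal (-Real.log (π ((if u1 ≤ d1 then a else 0) * b))) =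
          if u1 ≤ d1 then ENNReal.ofReal (-Real.log (π (a * b))) else 0 := by
        intro u1
        by_cases hu1 : u1 ≤ d1
        · rw [if_pos hu1, if_pos hu1]
        · rw [if_neg hu1, if_neg hu1, zero_mul, hzero]
      rw [lintegral_congr heq]
      exact lintegral_if_le _ h1'
    · simp only [if_neg hu2]
      have heq : ∀ u1 : ℝ, ENNReal.ofReal (-Real.log (π ((if u1 ≤ d1 then a else 0) * 0))) =
          (0:ℝ≥0∞) := by
        intro u1
        rw [mul_zero, hzero]
      rw [lintegral_congr heq, lintegral_zero]
  rw [lintegral_congr hinner, lintegral_if_le _ h2']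
  ring

lemma gamma_piece {K : ℕ} (hK : 1 ≤ K) {m : ℝ} (hm : 0 ≤ m) :
    (∫⁻ t in Ioo (0:ℝ) m, ENNReal.ofReal (t ^ (K - 1) * Real.exp (-t) / Real.Gamma K))
      = ENNReal.ofReal (∫ s in (0:ℝ)..(max m 0),
          s ^ (K - 1) * Real.exp (-s) / Real.Gamma K) := by
  have hcont : Continuous (fun s : ℝ => s ^ (K - 1) * Real.exp (-s) / Real.Gamma K) :=
    ((continuous_pow _).mul (Real.continuous_exp.comp continuous_neg)).div_const _
  have hΓ : 0 < Real.Gamma K := Real.Gamma_pos_of_pos (by exact_mod_cast hK)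
  have hnn : 0 ≤ᵐ[volume.restrict (Ioc (0:ℝ) m)]
      fun s : ℝ => s ^ (K - 1) * Real.exp (-s) / Real.Gamma K := by
    refine (ae_restrict_iff' measurableSet_Ioc).2 (Filter.Eventually.of_forall fun s hs => ?_)
    exact div_nonneg (mul_nonneg (pow_nonneg hs.1.le _) (Real.exp_nonneg _)) hΓ.le
  rw [max_eq_left hm, intervalIntegral.integral_of_le hm,
    ofReal_integral_eq_lintegral_ofReal (hcont.integrableOn_Ioc) hnn]
  exact setLIntegral_congr Ioo_ae_eq_Ioc
lemma t_eval {μ : Measure ℝ} (hμ_tail : ∀ y : ℝ, 0 < y → μ (Set.Ici y) < ⊤)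
    {K : ℕ} (hK : 1 ≤ K) {x1 x2 : ℝ} (hx1 : 0 < x1) (hx2 : 0 < x2) :
    (∫⁻ t in Ioi (0:ℝ), ENNReal.ofReal (t ^ (K - 1) * Real.exp (-t) / Real.Gamma K) *
      ((if ENNReal.ofReal t < μ (Set.Ici x1) then (1:ℝ≥0∞) else 0) *
       (if ENNReal.ofReal t < μ (Set.Ici x2) then (1:ℝ≥0∞) else 0))) =
    ENNReal.ofReal (∫ s in (0:ℝ)..(max ((μ (Set.Ici (max x1 x2))).toReal) 0),
        s ^ (K - 1) * Real.exp (-s) / Real.Gamma K) := by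
  set m : ℝ := (μ (Set.Ici (max x1 x2))).toReal with hm
  have hTmax : μ (Set.Ici (max x1 x2)) ≠ ⊤ :=
    (hμ_tail _ (lt_of_lt_of_le hx1 (le_max_left _ _))).ne
  have hmin : μ (Set.Ici (max x1 x2)) = min (μ (Set.Ici x1)) (μ (Set.Ici x2)) := by
    rcases le_total x1 x2 with h | h
    · rw [max_eq_right h, min_eq_right (measure_mono (Ici_subset_Ici.2 h))]
    · rw [max_eq_left h, min_eq_left (measure_mono (Ici_subset_Ici.2 h))]
  have hpt : ∀ t : ℝ, t ∈ Ioi (0:ℝ) →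
      ENNReal.ofReal (t ^ (K - 1) * Real.exp (-t) / Real.Gamma K) *
        ((if ENNReal.ofReal t < μ (Set.Ici x1) then (1:ℝ≥0∞) else 0) *
         (if ENNReal.ofReal t < μ (Set.Ici x2) then (1:ℝ≥0∞) else 0)) =
      (Iio m).indicator
        (fun s => ENNReal.ofReal (s ^ (K - 1) * Real.exp (-s) / Real.Gamma K)) t := by
    intro t ht
    have hiff : (t < m) ↔ (ENNReal.ofReal t < μ (Set.Ici x1) ∧
        ENNReal.ofReal t < μ (Set.Ici x2)) := by
      rw [← lt_min_iff, ← hmin, hm]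
      exact (ENNReal.ofReal_lt_iff_lt_toReal (le_of_lt ht) hTmax).symm
    rw [Set.indicator_apply]
    by_cases hc : t ∈ Iio m
    · obtain ⟨hA, hB⟩ := hiff.1 hc
      rw [if_pos hc, if_pos hA, if_pos hB, mul_one, mul_one]
    · rw [if_neg hc]
      have : ¬(ENNReal.ofReal t < μ (Set.Ici x1) ∧ ENNReal.ofReal t < μ (Set.Ici x2)) :=
        fun h => hc (hiff.2 h)
      rcases not_and_or.1 this with h | h
      · rw [if_neg h, zero_mul, mul_zero]
      · rw [if_neg h, mul_zero, mul_zero]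
  rw [setLIntegral_congr_fun measurableSet_Ioi hpt,
    lintegral_indicator measurableSet_Iio,
    Measure.restrict_restrict measurableSet_Iio]
  have hset : Iio m ∩ Ioi (0:ℝ) = Ioo 0 m := by
    ext u; simp only [mem_inter_iff, mem_Iio, mem_Ioi, mem_Ioo]; tauto
  rw [hset]
  exact gamma_piece hK ENNReal.toReal_nonneg

end RTCV

open scoped ENNReal

/-- Change-of-variables identity for the leading truncation-error term of
the rejection representation: with `τ(u,γ) = μ←(γ)·1[(dν/dμ)(μ←(γ)) ≥ u]` and `F_K` the
`Gamma(K,1)` CDF, as an identity in `[0,∞]`,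
`∫_0^∞ (t^{K−1}e^{−t}/Γ(K)) ∫_t^∞∫_t^∞∫_0^1∫_0^1 −log π(τ(u₁,γ₁)τ(u₂,γ₂)) du₁du₂dγ₁dγ₂ dt
  = ∫∫ −log π(x₁x₂)·F_K(μ([max(x₁,x₂),∞))) ν(dx₁)ν(dx₂)`. -/
theorem rejection_truncation_change_of_variables
    (ν μ : Measure ℝ) [SigmaFinite ν] [SigmaFinite μ]
    (hν_atomless : ∀ x : ℝ, ν {x} = 0) (hμ_atomless : ∀ x : ℝ, μ {x} = 0)
    (hν_supp : ν (Set.Iic 0) = 0) (hμ_supp : μ (Set.Iic 0) = 0)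
    (hν_inf : ν (Set.Ioi 0) = ⊤) (hμ_inf : μ (Set.Ioi 0) = ⊤)
    (hν_tail : ∀ y : ℝ, 0 < y → ν (Set.Ici y) < ⊤)
    (hμ_tail : ∀ y : ℝ, 0 < y → μ (Set.Ici y) < ⊤)
    (dνdμ : ℝ → ℝ) (hd_meas : Measurable dνdμ)
    (hd01 : ∀ y, 0 ≤ dνdμ y ∧ dνdμ y ≤ 1)
    (hac : ν = μ.withDensity fun y => ENNReal.ofReal (dνdμ y))
    (μinv : ℝ → ℝ)
    (hμinv : ∀ x : ℝ, μinv x = sInf {y : ℝ | 0 < y ∧ μ (Set.Ici y) ≤ ENNReal.ofReal x})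
    (π : ℝ → ℝ) (hπmeas : Measurable π)
    (hπ : ∀ x : ℝ, 0 ≤ x → 0 < π x ∧ π x ≤ 1) (hπ0 : π 0 = 1)
    (τ : ℝ → ℝ → ℝ)
    (hτ : ∀ u γ, τ u γ = if u ≤ dνdμ (μinv γ) then μinv γ else 0)
    (K : ℕ) (hK : 1 ≤ K)
    (FK : ℝ → ℝ)
    (hFK : ∀ t, FK t = ∫ s in (0 : ℝ)..(max t 0),
        s ^ (K - 1) * Real.exp (-s) / Real.Gamma K) :
    ∫⁻ t in Set.Ioi (0 : ℝ),
        ENNReal.ofReal (t ^ (K - 1) * Real.exp (-t) / Real.Gamma K) *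
          ∫⁻ γ2 in Set.Ioi t, ∫⁻ γ1 in Set.Ioi t,
            ∫⁻ u2 in Set.Icc (0 : ℝ) 1, ∫⁻ u1 in Set.Icc (0 : ℝ) 1,
              ENNReal.ofReal (-Real.log (π (τ u1 γ1 * τ u2 γ2)))
      = ∫⁻ x1, ∫⁻ x2,
          ENNReal.ofReal (-Real.log (π (x1 * x2))) *
            ENNReal.ofReal (FK ((μ (Set.Ici (max x1 x2))).toReal)) ∂ν ∂ν := by
  have hTanti : Antitone (fun x : ℝ => μ (Set.Ici x)) :=
    fun x y hxy => measure_mono (Set.Ici_subset_Ici.2 hxy)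
  have hTmeas : Measurable (fun x : ℝ => μ (Set.Ici x)) := hTanti.measurable
  have hPm : Measurable (fun t : ℝ =>
      ENNReal.ofReal (t ^ (K - 1) * Real.exp (-t) / Real.Gamma K)) :=
    ENNReal.measurable_ofReal.comp
      (((continuous_pow (K - 1)).mul
        (Real.continuous_exp.comp continuous_neg)).div_const _).measurable
  have hJm : Measurable (fun p : ℝ × ℝ => ENNReal.ofReal (-Real.log (π (p.1 * p.2)))) :=
    ENNReal.measurable_ofReal.comp
      ((Real.measurable_log.comp (hπmeas.comp (measurable_fst.mul measurable_snd))).neg)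
  have hWm : Measurable (fun p : ℝ × ℝ =>
      (if ENNReal.ofReal p.1 < μ (Set.Ici p.2) then (1 : ℝ≥0∞) else 0)) :=
    Measurable.ite
      (measurableSet_lt (ENNReal.measurable_ofReal.comp measurable_fst)
        (hTmeas.comp measurable_snd)) measurable_const measurable_const
  have hWne : ∀ t x : ℝ,
      (if ENNReal.ofReal t < μ (Set.Ici x) then (1 : ℝ≥0∞) else 0) ≠ ⊤ := by
    intro t x; split_ifs <;> simp
  have hνpos : ∀ᵐ x ∂ν, 0 < x := by
    rw [ae_iff]
    have h : {x : ℝ | ¬0 < x} = Set.Iic 0 := by ext x; simp [not_lt]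
    rw [h]; exact hν_supp
  have hIm : Measurable (fun p : ℝ × ℝ =>
      ∫⁻ x1, ENNReal.ofReal (-Real.log (π (x1 * p.2))) *
        (if ENNReal.ofReal p.1 < μ (Set.Ici x1) then (1 : ℝ≥0∞) else 0) ∂ν) := by
    apply Measurable.lintegral_prod_right' (f := fun q : (ℝ × ℝ) × ℝ =>
      ENNReal.ofReal (-Real.log (π (q.2 * q.1.2))) *
        (if ENNReal.ofReal q.1.1 < μ (Set.Ici q.2) then (1 : ℝ≥0∞) else 0))
    exact (hJm.comp (measurable_snd.prodMk measurable_fst.snd)).mul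
      (hWm.comp (measurable_fst.fst.prodMk measurable_snd))
  have hwd : ∀ g : ℝ → ℝ≥0∞, Measurable g → ∀ s : Set ℝ, MeasurableSet s →
      (∫⁻ x in s, ENNReal.ofReal (dνdμ x) * g x ∂μ) = ∫⁻ x in s, g x ∂ν := by
    intro g hg s hs
    rw [hac, restrict_withDensity hs]
    exact (lintegral_withDensity_eq_lintegral_mul _
      (ENNReal.measurable_ofReal.comp hd_meas) hg).symm
  have inner_eq : ∀ t : ℝ, 0 < t →
      (∫⁻ γ2 in Set.Ioi t, ∫⁻ γ1 in Set.Ioi t,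
        ∫⁻ u2 in Set.Icc (0 : ℝ) 1, ∫⁻ u1 in Set.Icc (0 : ℝ) 1,
          ENNReal.ofReal (-Real.log (π (τ u1 γ1 * τ u2 γ2)))) =
      ∫⁻ x2, (∫⁻ x1, ENNReal.ofReal (-Real.log (π (x1 * x2))) *
          (if ENNReal.ofReal t < μ (Set.Ici x1) then (1 : ℝ≥0∞) else 0) ∂ν) *
        (if ENNReal.ofReal t < μ (Set.Ici x2) then (1 : ℝ≥0∞) else 0) ∂ν := by
    intro t ht
    have hstep1 : ∀ γ2 : ℝ,
        (∫⁻ γ1 in Set.Ioi t, ∫⁻ u2 in Set.Icc (0 : ℝ) 1, ∫⁻ u1 in Set.Icc (0 : ℝ) 1,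
          ENNReal.ofReal (-Real.log (π (τ u1 γ1 * τ u2 γ2)))) =
        ENNReal.ofReal (dνdμ (μinv γ2)) *
          ∫⁻ x1, ENNReal.ofReal (-Real.log (π (x1 * μinv γ2))) *
            (if ENNReal.ofReal t < μ (Set.Ici x1) then (1 : ℝ≥0∞) else 0) ∂ν := by
      intro γ2
      have hq : ∀ γ1 : ℝ, (∫⁻ u2 in Set.Icc (0 : ℝ) 1, ∫⁻ u1 in Set.Icc (0 : ℝ) 1,
            ENNReal.ofReal (-Real.log (π (τ u1 γ1 * τ u2 γ2)))) =
          ENNReal.ofReal (dνdμ (μinv γ1)) * (ENNReal.ofReal (dνdμ (μinv γ2)) *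
            ENNReal.ofReal (-Real.log (π (μinv γ1 * μinv γ2)))) := by
        intro γ1
        simp only [hτ]
        exact RTCV.quad_eval π hπ0 (hd01 (μinv γ1)).2 (hd01 (μinv γ2)).1
          (hd01 (μinv γ2)).2 (μinv γ1) (μinv γ2)
      rw [setLIntegral_congr_fun measurableSet_Ioi
        (fun γ1 _ => hq γ1)]
      have hfm : Measurable (fun x1 : ℝ => ENNReal.ofReal (dνdμ x1) *
          (ENNReal.ofReal (dνdμ (μinv γ2)) *
            ENNReal.ofReal (-Real.log (π (x1 * μinv γ2))))) := by
        apply (ENNReal.measurable_ofReal.comp hd_meas).mul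
        exact measurable_const.mul (ENNReal.measurable_ofReal.comp
          ((Real.measurable_log.comp
            (hπmeas.comp (measurable_id.mul measurable_const))).neg))
      have hgm : Measurable (fun x1 : ℝ => ENNReal.ofReal (dνdμ (μinv γ2)) *
          ENNReal.ofReal (-Real.log (π (x1 * μinv γ2)))) :=
        measurable_const.mul (ENNReal.measurable_ofReal.comp
          ((Real.measurable_log.comp
            (hπmeas.comp (measurable_id.mul measurable_const))).neg))
      calc (∫⁻ γ1 in Set.Ioi t, ENNReal.ofReal (dνdμ (μinv γ1)) *
              (ENNReal.ofReal (dνdμ (μinv γ2)) *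
                ENNReal.ofReal (-Real.log (π (μinv γ1 * μinv γ2)))))
          = ∫⁻ x1 in Set.Iio (μinv t), ENNReal.ofReal (dνdμ x1) *
              (ENNReal.ofReal (dνdμ (μinv γ2)) *
                ENNReal.ofReal (-Real.log (π (x1 * μinv γ2)))) ∂μ :=
            RTCV.lintegral_μinv hμ_atomless hμ_supp hμ_inf hμ_tail hμinv ht hfm
        _ = ∫⁻ x1 in Set.Iio (μinv t), ENNReal.ofReal (dνdμ (μinv γ2)) *
              ENNReal.ofReal (-Real.log (π (x1 * μinv γ2))) ∂ν :=
            hwd _ hgm _ measurableSet_Iio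
        _ = ENNReal.ofReal (dνdμ (μinv γ2)) *
              ∫⁻ x1, ENNReal.ofReal (-Real.log (π (x1 * μinv γ2))) *
                (if ENNReal.ofReal t < μ (Set.Ici x1) then (1 : ℝ≥0∞) else 0) ∂ν := by
            rw [← lintegral_indicator measurableSet_Iio,
              ← lintegral_const_mul' _ _ ENNReal.ofReal_ne_top]
            apply lintegral_congr
            intro x1
            rw [Set.indicator_apply]
            by_cases hx : x1 ∈ Set.Iio (μinv t)
            · rw [if_pos hx, if_pos ((RTCV.lt_μinv_iff hμ_atomless hμ_inf hμ_tail
                hμinv ht x1).1 hx), mul_one]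
            · rw [if_neg hx, if_neg (fun hcon => hx (Set.mem_Iio.2
                ((RTCV.lt_μinv_iff hμ_atomless hμ_inf hμ_tail hμinv ht x1).2 hcon))),
                mul_zero, mul_zero]
    rw [setLIntegral_congr_fun measurableSet_Ioi
      (fun γ2 _ => hstep1 γ2)]
    have hgm3 : Measurable (fun x2 : ℝ =>
        ∫⁻ x1, ENNReal.ofReal (-Real.log (π (x1 * x2))) *
          (if ENNReal.ofReal t < μ (Set.Ici x1) then (1 : ℝ≥0∞) else 0) ∂ν) :=
      hIm.comp (measurable_const.prodMk measurable_id)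
    have hgm2 : Measurable (fun x2 : ℝ => ENNReal.ofReal (dνdμ x2) *
        ∫⁻ x1, ENNReal.ofReal (-Real.log (π (x1 * x2))) *
          (if ENNReal.ofReal t < μ (Set.Ici x1) then (1 : ℝ≥0∞) else 0) ∂ν) :=
      (ENNReal.measurable_ofReal.comp hd_meas).mul hgm3
    calc (∫⁻ γ2 in Set.Ioi t, ENNReal.ofReal (dνdμ (μinv γ2)) *
            ∫⁻ x1, ENNReal.ofReal (-Real.log (π (x1 * μinv γ2))) *
              (if ENNReal.ofReal t < μ (Set.Ici x1) then (1 : ℝ≥0∞) else 0) ∂ν)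
        = ∫⁻ x2 in Set.Iio (μinv t), ENNReal.ofReal (dνdμ x2) *
            ∫⁻ x1, ENNReal.ofReal (-Real.log (π (x1 * x2))) *
              (if ENNReal.ofReal t < μ (Set.Ici x1) then (1 : ℝ≥0∞) else 0) ∂ν ∂μ :=
          RTCV.lintegral_μinv hμ_atomless hμ_supp hμ_inf hμ_tail hμinv ht hgm2
      _ = ∫⁻ x2 in Set.Iio (μinv t),
            (∫⁻ x1, ENNReal.ofReal (-Real.log (π (x1 * x2))) *
              (if ENNReal.ofReal t < μ (Set.Ici x1) then (1 : ℝ≥0∞) else 0) ∂ν) ∂ν :=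
          hwd _ hgm3 _ measurableSet_Iio
      _ = ∫⁻ x2, (∫⁻ x1, ENNReal.ofReal (-Real.log (π (x1 * x2))) *
            (if ENNReal.ofReal t < μ (Set.Ici x1) then (1 : ℝ≥0∞) else 0) ∂ν) *
          (if ENNReal.ofReal t < μ (Set.Ici x2) then (1 : ℝ≥0∞) else 0) ∂ν := by
          rw [← lintegral_indicator measurableSet_Iio]
          apply lintegral_congr
          intro x2
          rw [Set.indicator_apply]
          by_cases hx : x2 ∈ Set.Iio (μinv t)
          · rw [if_pos hx, if_pos ((RTCV.lt_μinv_iff hμ_atomless hμ_inf hμ_tail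
              hμinv ht x2).1 hx), mul_one]
          · rw [if_neg hx, if_neg (fun hcon => hx (Set.mem_Iio.2
              ((RTCV.lt_μinv_iff hμ_atomless hμ_inf hμ_tail hμinv ht x2).2 hcon))),
              mul_zero]
  have hAE1 : AEMeasurable (Function.uncurry fun t x2 =>
      ENNReal.ofReal (t ^ (K - 1) * Real.exp (-t) / Real.Gamma K) *
        ((∫⁻ x1, ENNReal.ofReal (-Real.log (π (x1 * x2))) *
          (if ENNReal.ofReal t < μ (Set.Ici x1) then (1 : ℝ≥0∞) else 0) ∂ν) *
        (if ENNReal.ofReal t < μ (Set.Ici x2) then (1 : ℝ≥0∞) else 0)))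
      ((volume.restrict (Set.Ioi (0:ℝ))).prod ν) :=
    ((hPm.comp measurable_fst).mul (hIm.mul hWm)).aemeasurable
  have hAE2 : ∀ x2 : ℝ, AEMeasurable (Function.uncurry fun t x1 =>
      (ENNReal.ofReal (t ^ (K - 1) * Real.exp (-t) / Real.Gamma K) *
        (if ENNReal.ofReal t < μ (Set.Ici x2) then (1 : ℝ≥0∞) else 0)) *
      (ENNReal.ofReal (-Real.log (π (x1 * x2))) *
        (if ENNReal.ofReal t < μ (Set.Ici x1) then (1 : ℝ≥0∞) else 0)))
      ((volume.restrict (Set.Ioi (0:ℝ))).prod ν) := by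
    intro x2
    exact (((hPm.comp measurable_fst).mul
        (hWm.comp (measurable_fst.prodMk measurable_const))).mul
      ((hJm.comp (measurable_snd.prodMk measurable_const)).mul hWm)).aemeasurable
  calc (∫⁻ t in Set.Ioi (0 : ℝ),
        ENNReal.ofReal (t ^ (K - 1) * Real.exp (-t) / Real.Gamma K) *
          ∫⁻ γ2 in Set.Ioi t, ∫⁻ γ1 in Set.Ioi t,
            ∫⁻ u2 in Set.Icc (0 : ℝ) 1, ∫⁻ u1 in Set.Icc (0 : ℝ) 1,
              ENNReal.ofReal (-Real.log (π (τ u1 γ1 * τ u2 γ2))))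
      = ∫⁻ t in Set.Ioi (0 : ℝ), ∫⁻ x2,
          ENNReal.ofReal (t ^ (K - 1) * Real.exp (-t) / Real.Gamma K) *
            ((∫⁻ x1, ENNReal.ofReal (-Real.log (π (x1 * x2))) *
              (if ENNReal.ofReal t < μ (Set.Ici x1) then (1 : ℝ≥0∞) else 0) ∂ν) *
            (if ENNReal.ofReal t < μ (Set.Ici x2) then (1 : ℝ≥0∞) else 0)) ∂ν := by
        apply setLIntegral_congr_fun measurableSet_Ioi
        intro t ht
        beta_reduce
        rw [inner_eq t ht, ← lintegral_const_mul' _ _ ENNReal.ofReal_ne_top]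
    _ = ∫⁻ x2, (∫⁻ t in Set.Ioi (0 : ℝ),
          ENNReal.ofReal (t ^ (K - 1) * Real.exp (-t) / Real.Gamma K) *
            ((∫⁻ x1, ENNReal.ofReal (-Real.log (π (x1 * x2))) *
              (if ENNReal.ofReal t < μ (Set.Ici x1) then (1 : ℝ≥0∞) else 0) ∂ν) *
            (if ENNReal.ofReal t < μ (Set.Ici x2) then (1 : ℝ≥0∞) else 0))) ∂ν :=
        lintegral_lintegral_swap hAE1
    _ = ∫⁻ x2, ∫⁻ x1, ENNReal.ofReal (-Real.log (π (x1 * x2))) *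
          (∫⁻ t in Set.Ioi (0 : ℝ),
            ENNReal.ofReal (t ^ (K - 1) * Real.exp (-t) / Real.Gamma K) *
              ((if ENNReal.ofReal t < μ (Set.Ici x1) then (1 : ℝ≥0∞) else 0) *
               (if ENNReal.ofReal t < μ (Set.Ici x2) then (1 : ℝ≥0∞) else 0))) ∂ν ∂ν := by
        apply lintegral_congr
        intro x2
        calc (∫⁻ t in Set.Ioi (0 : ℝ),
              ENNReal.ofReal (t ^ (K - 1) * Real.exp (-t) / Real.Gamma K) *
                ((∫⁻ x1, ENNReal.ofReal (-Real.log (π (x1 * x2))) *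
                  (if ENNReal.ofReal t < μ (Set.Ici x1) then (1 : ℝ≥0∞) else 0) ∂ν) *
                (if ENNReal.ofReal t < μ (Set.Ici x2) then (1 : ℝ≥0∞) else 0)))
            = ∫⁻ t in Set.Ioi (0 : ℝ), ∫⁻ x1,
                (ENNReal.ofReal (t ^ (K - 1) * Real.exp (-t) / Real.Gamma K) *
                  (if ENNReal.ofReal t < μ (Set.Ici x2) then (1 : ℝ≥0∞) else 0)) *
                (ENNReal.ofReal (-Real.log (π (x1 * x2))) *
                  (if ENNReal.ofReal t < μ (Set.Ici x1) then (1 : ℝ≥0∞) else 0)) ∂ν := by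
              apply lintegral_congr
              intro t
              rw [lintegral_const_mul'
                (ENNReal.ofReal (t ^ (K - 1) * Real.exp (-t) / Real.Gamma K) *
                  (if ENNReal.ofReal t < μ (Set.Ici x2) then (1 : ℝ≥0∞) else 0)) _
                (ENNReal.mul_ne_top ENNReal.ofReal_ne_top (hWne t x2))]
              ring
          _ = ∫⁻ x1, (∫⁻ t in Set.Ioi (0 : ℝ),
                (ENNReal.ofReal (t ^ (K - 1) * Real.exp (-t) / Real.Gamma K) *
                  (if ENNReal.ofReal t < μ (Set.Ici x2) then (1 : ℝ≥0∞) else 0)) *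
                (ENNReal.ofReal (-Real.log (π (x1 * x2))) *
                  (if ENNReal.ofReal t < μ (Set.Ici x1) then (1 : ℝ≥0∞) else 0))) ∂ν :=
              lintegral_lintegral_swap (hAE2 x2)
          _ = ∫⁻ x1, ENNReal.ofReal (-Real.log (π (x1 * x2))) *
                (∫⁻ t in Set.Ioi (0 : ℝ),
                  ENNReal.ofReal (t ^ (K - 1) * Real.exp (-t) / Real.Gamma K) *
                    ((if ENNReal.ofReal t < μ (Set.Ici x1) then (1 : ℝ≥0∞) else 0) *
                     (if ENNReal.ofReal t < μ (Set.Ici x2) then (1 : ℝ≥0∞) else 0))) ∂ν := by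
              apply lintegral_congr
              intro x1
              rw [← lintegral_const_mul' _ _ ENNReal.ofReal_ne_top]
              apply lintegral_congr
              intro t
              ring
    _ = ∫⁻ x2, ∫⁻ x1, ENNReal.ofReal (-Real.log (π (x1 * x2))) *
          ENNReal.ofReal (FK ((μ (Set.Ici (max x1 x2))).toReal)) ∂ν ∂ν := by
        apply lintegral_congr_ae
        filter_upwards [hνpos] with x2 hx2
        apply lintegral_congr_ae
        filter_upwards [hνpos] with x1 hx1
        congr 1
        rw [hFK]
        exact RTCV.t_eval hμ_tail hK hx1 hx2
    _ = ∫⁻ x1, ∫⁻ x2,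
          ENNReal.ofReal (-Real.log (π (x1 * x2))) *
            ENNReal.ofReal (FK ((μ (Set.Ici (max x1 x2))).toReal)) ∂ν ∂ν := by
        apply lintegral_congr
        intro a
        apply lintegral_congr
        intro b
        rw [mul_comm b a, max_comm b a]
end

section
/- Let γ' > 0 and λ > 1/2, and let c > 1 be the unique real number satisfying 3γ'·log c = 1/c. Let F_K(t) = ∫_0^{max(t,0)} s^{K−1} e^{−s} / Γ(K) ds be the Gamma(K,1) cumulative distribution function. Then there exists K₀ ∈ ℕ such that for all K ≥ K₀, ∫_0^1 (1−x)^{2(λ−1)} · F_K(−γ'·log x) dx ≤ 2·c^{−K}. -/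
open MeasureTheory

open Set

set_option maxHeartbeats 1000000

private lemma gcont (m : ℕ) (A : ℝ) :
    Continuous (fun s : ℝ => s ^ m * Real.exp (-s) / A) :=
  ((continuous_pow m).mul (Real.continuous_exp.comp continuous_neg)).div_const A

private lemma FKcont (m : ℕ) (A : ℝ) :
    Continuous (fun t : ℝ => ∫ s in (0:ℝ)..(max t 0), s ^ m * Real.exp (-s) / A) :=
  (intervalIntegral.continuous_primitive
      (fun a b => ((gcont m A).intervalIntegrable a b)) 0).comp
    (continuous_id.max continuous_const)

private lemma Gamma_succ_pos (m : ℕ) : (0:ℝ) < Real.Gamma ((m+1 : ℕ) : ℝ) :=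
  Real.Gamma_pos_of_pos (by positivity)

private lemma FKnonneg (m : ℕ) (t : ℝ) :
    0 ≤ ∫ s in (0:ℝ)..(max t 0), s ^ m * Real.exp (-s) / Real.Gamma ((m+1 : ℕ) : ℝ) := by
  apply intervalIntegral.integral_nonneg (le_max_right t 0)
  intro u hu
  exact div_nonneg (mul_nonneg (pow_nonneg hu.1 m) (Real.exp_nonneg _)) (Gamma_succ_pos m).le

private lemma Gamma_succ_eq (m : ℕ) :
    Real.Gamma ((m+1 : ℕ) : ℝ) = ∫ x in Ioi (0:ℝ), x ^ m * Real.exp (-x) := by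
  rw [Real.Gamma_eq_integral (by positivity : (0:ℝ) < ((m+1:ℕ):ℝ))]
  refine setIntegral_congr_fun measurableSet_Ioi (fun x hx => ?_)
  rw [show ((m+1:ℕ):ℝ) - 1 = ((m:ℕ):ℝ) by push_cast; ring]; beta_reduce; rw [Real.rpow_natCast]
  ring

private lemma gamma_integrable (m : ℕ) :
    IntegrableOn (fun x : ℝ => x ^ m * Real.exp (-x)) (Ioi (0:ℝ)) := by
  have h := Real.GammaIntegral_convergent (s := ((m+1:ℕ):ℝ)) (by positivity)
  refine h.congr_fun (fun x hx => ?_) measurableSet_Ioi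
  rw [show ((m+1:ℕ):ℝ) - 1 = ((m:ℕ):ℝ) by push_cast; ring]; beta_reduce; rw [Real.rpow_natCast]
  ring

private lemma FKle_one (m : ℕ) (t : ℝ) :
    (∫ s in (0:ℝ)..(max t 0), s ^ m * Real.exp (-s) / Real.Gamma ((m+1 : ℕ) : ℝ)) ≤ 1 := by
  have hΓ := Gamma_succ_pos m
  rw [intervalIntegral.integral_div, div_le_one hΓ]
  rw [intervalIntegral.integral_of_le (le_max_right t 0)]
  rw [Gamma_succ_eq m]
  refine setIntegral_mono_set (gamma_integrable m) ?_ (HasSubset.Subset.eventuallyLE Ioc_subset_Ioi_self)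
  refine (ae_restrict_iff' measurableSet_Ioi).2 (Filter.Eventually.of_forall (fun x hx => ?_))
  exact mul_nonneg (pow_nonneg (le_of_lt hx) m) (Real.exp_nonneg _)

private lemma FKle_pow (m : ℕ) {t : ℝ} (ht : 0 ≤ t) :
    (∫ s in (0:ℝ)..(max t 0), s ^ m * Real.exp (-s) / Real.Gamma ((m+1 : ℕ) : ℝ))
      ≤ t ^ (m+1) / (Nat.factorial (m+1) : ℝ) := by
  have hΓ := Gamma_succ_pos m
  rw [max_eq_left ht]
  have h1 : (∫ s in (0:ℝ)..t, s ^ m * Real.exp (-s) / Real.Gamma ((m+1:ℕ):ℝ))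
      ≤ ∫ s in (0:ℝ)..t, s ^ m / Real.Gamma ((m+1:ℕ):ℝ) := by
    refine intervalIntegral.integral_mono_on ht
      ((gcont m _).intervalIntegrable _ _)
      (((continuous_pow m).div_const _).intervalIntegrable _ _) (fun u hu => ?_)
    have hb : u ^ m * Real.exp (-u) ≤ u ^ m :=
      mul_le_of_le_one_right (pow_nonneg hu.1 m) (Real.exp_le_one_iff.2 (by linarith [hu.1]))
    exact (div_le_div_iff_of_pos_right hΓ).2 hb
  simp only [intervalIntegral.integral_div] at h1
  have hΓfac : Real.Gamma ((m+1:ℕ):ℝ) = (Nat.factorial m : ℝ) := by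
    rw [show ((m+1:ℕ):ℝ) = (m:ℝ)+1 by push_cast; ring, Real.Gamma_nat_eq_factorial]
  rw [integral_pow, hΓfac] at h1
  rw [intervalIntegral.integral_div, hΓfac]
  refine h1.trans (le_of_eq ?_)
  rw [Nat.factorial_succ, zero_pow (Nat.succ_ne_zero m)]
  have hm : ((Nat.factorial m : ℕ):ℝ) ≠ 0 := by positivity
  push_cast
  field_simp
  ring

private lemma w_integrable {q : ℝ} (hq : -1 < q) :
    IntegrableOn (fun x : ℝ => (1-x) ^ q) (Ioo (0:ℝ) 1) := by
  have h := intervalIntegral.intervalIntegrable_rpow' (a := 0) (b := 1) hq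
  have h2 := h.comp_sub_left 1
  have h2s := h2.symm
  norm_num at h2s
  rwa [intervalIntegrable_iff_integrableOn_Ioo_of_le (by norm_num : (0:ℝ) ≤ 1)] at h2s

private lemma w_value {q : ℝ} (hq : -1 < q) :
    ∫ x in Ioo (0:ℝ) 1, (1-x) ^ q = 1/(q+1) := by
  rw [← integral_Ioc_eq_integral_Ioo, ← intervalIntegral.integral_of_le (by norm_num : (0:ℝ) ≤ 1)]
  have h := intervalIntegral.integral_comp_sub_left (a := 0) (b := 1) (fun y : ℝ => y ^ q) 1
  norm_num at h
  rw [h, integral_rpow (Or.inl hq), Real.one_rpow, Real.zero_rpow (by linarith)]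
  ring

/-- Key estimate for the dense (`α = 0`) beta–Bernoulli network: for
`γ' > 0`, `λ > 1/2`, and `c > 1` the unique solution of `3γ'·log c = 1/c`, there exists
`K₀` such that for all `K ≥ K₀`,
`∫_0^1 (1−x)^{2(λ−1)} F_K(−γ' log x) dx ≤ 2·c^{−K}`,
where `F_K` is the `Gamma(K,1)` CDF. -/
theorem dense_beta_bernoulli_truncation_integral_bound
    (γ' lam : ℝ) (hγ' : 0 < γ') (hlam : 1 / 2 < lam)
    (c : ℝ) (hc : 1 < c) (hceq : 3 * γ' * Real.log c = 1 / c)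
    (FK : ℕ → ℝ → ℝ)
    (hFK : ∀ (K : ℕ) (t : ℝ), FK K t = ∫ s in (0 : ℝ)..(max t 0),
        s ^ (K - 1) * Real.exp (-s) / Real.Gamma K) :
    ∃ K₀ : ℕ, ∀ K : ℕ, K₀ ≤ K →
      ∫ x in Set.Ioo (0 : ℝ) 1, (1 - x) ^ (2 * (lam - 1)) * FK K (-γ' * Real.log x)
        ≤ 2 / c ^ K := by
  have hc0 : (0:ℝ) < c := lt_trans one_pos hc
  set r : ℝ := 7 * Real.exp 1 / 20 with hr_def
  have hr0 : 0 < r := by positivity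
  have hr1 : r < 1 := by
    have := Real.exp_one_lt_d9
    rw [hr_def]; nlinarith
  have hlam1 : (0:ℝ) < 2 * lam - 1 := by linarith
  obtain ⟨N1, hN1⟩ := exists_pow_lt_of_lt_one hlam1 hr1
  set d : ℝ := c ^ ((1:ℝ)/20) with hd_def
  have hd1 : 1 < d := by
    rw [hd_def]
    exact (Real.one_lt_rpow_iff_of_pos hc0).2 (Or.inl ⟨hc, by norm_num⟩)
  obtain ⟨N2, hN2⟩ := pow_unbounded_of_one_lt (2:ℝ) hd1
  refine ⟨max (max N1 N2) 1, fun K hK => ?_⟩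
  have hK1 : 1 ≤ K := le_trans (le_max_right _ 1) hK
  have hKN1 : N1 ≤ K := le_trans (le_trans (le_max_left N1 N2) (le_max_left _ 1)) hK
  have hKN2 : N2 ≤ K := le_trans (le_trans (le_max_right N1 N2) (le_max_left _ 1)) hK
  obtain ⟨m, rfl⟩ : ∃ m, K = m + 1 := ⟨K - 1, (Nat.succ_pred_eq_of_pos hK1).symm⟩
  set Kr : ℝ := ((m+1 : ℕ) : ℝ) with hKr_def
  have hKr0 : 0 < Kr := by positivity
  have hlogc : 0 < Real.log c := Real.log_pos hc
  have hγlc : γ' * Real.log c = 1 / (3 * c) := by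
    field_simp at hceq ⊢; linarith
  -- the truncation point δ
  set δ : ℝ := c ^ (-(21/20 : ℝ) * Kr) with hδ_def
  have hδpos : 0 < δ := Real.rpow_pos_of_pos hc0 _
  have hδlt1 : δ < 1 := by
    rw [hδ_def]
    exact Real.rpow_lt_one_of_one_lt_of_neg hc (by nlinarith)
  -- 2δ ≤ (c^K)⁻¹
  have hdK : (d : ℝ) ^ (m+1) = c ^ ((1/20 : ℝ) * Kr) := by
    rw [hd_def, ← Real.rpow_natCast (c ^ ((1:ℝ)/20)) (m+1), ← Real.rpow_mul hc0.le]
  have hprod : d ^ (m+1) * δ = (c ^ (m+1) : ℝ)⁻¹ := by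
    rw [hdK, hδ_def, ← Real.rpow_add hc0,
      show (1/20 : ℝ) * Kr + -(21/20) * Kr = -Kr by ring,
      Real.rpow_neg hc0.le, hKr_def, Real.rpow_natCast]
  have hdmono : (2:ℝ) ≤ d ^ (m+1) :=
    le_trans hN2.le (pow_le_pow_right₀ hd1.le hKN2)
  have h2δ : 2 * δ ≤ (c ^ (m+1) : ℝ)⁻¹ := by
    rw [← hprod]
    exact mul_le_mul_of_nonneg_right hdmono hδpos.le
  have hcK1 : (1:ℝ) ≤ c ^ (m+1) := one_le_pow₀ hc.le
  have hδhalf : δ ≤ 1/2 := by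
    have : (c ^ (m+1) : ℝ)⁻¹ ≤ 1 := inv_le_one_of_one_le₀ hcK1
    linarith
  have hrK : r ^ (m+1) ≤ 2 * lam - 1 :=
    le_trans (pow_le_pow_of_le_one hr0.le hr1.le hKN1) hN1.le
  -- rewrite FK
  have hFK' : ∀ t, FK (m+1) t
      = ∫ s in (0:ℝ)..(max t 0), s ^ m * Real.exp (-s) / Real.Gamma ((m+1:ℕ):ℝ) := by
    intro t; rw [hFK]; norm_num
  have hF0 : ∀ t, 0 ≤ FK (m+1) t := fun t => (hFK' t) ▸ FKnonneg m t
  have hF1 : ∀ t, FK (m+1) t ≤ 1 := fun t => (hFK' t) ▸ FKle_one m t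
  have hFpow : ∀ t : ℝ, 0 ≤ t → FK (m+1) t ≤ t ^ (m+1) / (Nat.factorial (m+1) : ℝ) :=
    fun t ht => (hFK' t) ▸ FKle_pow m ht
  have hFcont : Continuous (FK (m+1)) := by
    have : FK (m+1) = fun t => ∫ s in (0:ℝ)..(max t 0),
        s ^ m * Real.exp (-s) / Real.Gamma ((m+1:ℕ):ℝ) := funext hFK'
    rw [this]; exact FKcont m _
  -- the weight
  set q : ℝ := 2 * (lam - 1) with hq_def
  have hq1 : -1 < q := by rw [hq_def]; linarith
  have hw_int := w_integrable hq1
  have hw_val := w_value hq1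
  -- continuity and integrability of the integrand
  set f : ℝ → ℝ := fun x => (1 - x) ^ q * FK (m+1) (-γ' * Real.log x) with hf_def
  have hcont : ContinuousOn f (Ioo (0:ℝ) 1) := by
    apply ContinuousOn.mul
    · exact ContinuousOn.rpow_const (continuous_const.sub continuous_id).continuousOn
        (fun x hx => Or.inl (sub_ne_zero.2 (ne_of_gt hx.2)))
    · exact hFcont.comp_continuousOn
        (continuousOn_const.mul (Real.continuousOn_log.mono
          (fun x hx => by simp only [mem_compl_iff, mem_singleton_iff]; exact ne_of_gt hx.1)))
  have hfb : ∀ x ∈ Ioo (0:ℝ) 1, ‖f x‖ ≤ (1 - x) ^ q := by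
    intro x hx
    have hw0 : (0:ℝ) ≤ (1 - x) ^ q := Real.rpow_nonneg (by linarith [hx.2]) q
    rw [Real.norm_eq_abs, abs_of_nonneg (mul_nonneg hw0 (hF0 _))]
    exact mul_le_of_le_one_right hw0 (hF1 _)
  have hf_int : IntegrableOn f (Ioo (0:ℝ) 1) := by
    refine Integrable.mono' hw_int (hcont.aestronglyMeasurable measurableSet_Ioo) ?_
    exact (ae_restrict_iff' measurableSet_Ioo).2 (Filter.Eventually.of_forall hfb)
  -- split the integral at δ
  have hsub1 : Ioo (0:ℝ) δ ⊆ Ioo 0 1 := Ioo_subset_Ioo le_rfl hδlt1.le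
  have hsub2 : Ico δ 1 ⊆ Ioo (0:ℝ) 1 := fun x hx => ⟨lt_of_lt_of_le hδpos hx.1, hx.2⟩
  have hdisj : Disjoint (Ioo (0:ℝ) δ) (Ico δ 1) := by
    rw [Set.disjoint_left]
    rintro x ⟨_, h2⟩ ⟨h3, _⟩
    exact absurd h3 (not_le.2 h2)
  have hsplit : ∫ x in Ioo (0:ℝ) 1, f x
      = (∫ x in Ioo (0:ℝ) δ, f x) + ∫ x in Ico δ 1, f x := by
    rw [← setIntegral_union hdisj measurableSet_Ico
      (hf_int.mono_set hsub1) (hf_int.mono_set hsub2),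
      Set.Ioo_union_Ico_eq_Ioo hδpos hδlt1.le]
  -- piece 1
  have hp1 : (∫ x in Ioo (0:ℝ) δ, f x) ≤ 2 * δ := by
    have hb : ∀ x ∈ Ioo (0:ℝ) δ, f x ≤ 2 := by
      intro x hx
      have hx1 : x < 1 := lt_trans hx.2 hδlt1
      have h1x : 0 < 1 - x := by linarith
      have hw1 : (1 - x) ^ q ≤ (1 - x) ^ (-1 : ℝ) :=
        Real.rpow_le_rpow_of_exponent_ge h1x (by linarith [hx.1]) hq1.le
      have hw2 : (1 - x) ^ (-1 : ℝ) ≤ 2 := by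
        rw [Real.rpow_neg_one]
        rw [show (2:ℝ) = ((1:ℝ)/2)⁻¹ by norm_num]
        exact inv_anti₀ (by norm_num) (by linarith [hx.2, hδhalf])
      calc f x ≤ (1 - x) ^ q * 1 :=
            mul_le_mul_of_nonneg_left (hF1 _) (Real.rpow_nonneg h1x.le q)
        _ = (1 - x) ^ q := mul_one _
        _ ≤ 2 := le_trans hw1 hw2
    calc (∫ x in Ioo (0:ℝ) δ, f x) ≤ ∫ _x in Ioo (0:ℝ) δ, (2:ℝ) := by
          refine setIntegral_mono_on (hf_int.mono_set hsub1) ?_ measurableSet_Ioo hb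
          exact integrableOn_const (by rw [Real.volume_Ioo]; exact ENNReal.ofReal_ne_top) (by simp)
      _ = 2 * δ := by
          rw [setIntegral_const, Real.volume_real_Ioo_of_le (by linarith), smul_eq_mul]
          ring
  -- piece 2
  set T : ℝ := 7 * Kr / (20 * c) with hT_def
  have hT0 : 0 ≤ T := by positivity
  have hlogδ : Real.log δ = (-(21/20 : ℝ) * Kr) * Real.log c := Real.log_rpow hc0 _
  have hTδ : -γ' * Real.log δ = T := by
    rw [hlogδ, hT_def, show -γ' * (-(21/20 : ℝ) * Kr * Real.log c)
      = (21/20 : ℝ) * Kr * (γ' * Real.log c) by ring, hγlc]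
    field_simp
    ring
  set M : ℝ := T ^ (m+1) / (Nat.factorial (m+1) : ℝ) with hM_def
  have hM0 : 0 ≤ M := by positivity
  have hp2 : (∫ x in Ico δ 1, f x) ≤ M * (1/(q+1)) := by
    have hb : ∀ x ∈ Ico δ 1, f x ≤ M * (1 - x) ^ q := by
      intro x hx
      have hx0 : 0 < x := lt_of_lt_of_le hδpos hx.1
      have h1x : 0 ≤ 1 - x := by linarith [hx.2]
      have ht0 : 0 ≤ -γ' * Real.log x := by
        have := Real.log_nonpos hx0.le hx.2.le
        nlinarith
      have htT : -γ' * Real.log x ≤ T := by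
        rw [← hTδ]
        have := Real.log_le_log hδpos hx.1
        nlinarith
      have hFx : FK (m+1) (-γ' * Real.log x) ≤ M := by
        refine le_trans (hFpow _ ht0) ?_
        rw [hM_def]
        exact div_le_div_of_nonneg_right (pow_le_pow_left₀ ht0 htT _)
          (by positivity : (0:ℝ) ≤ (Nat.factorial (m+1) : ℝ))
      calc f x ≤ (1 - x) ^ q * M :=
            mul_le_mul_of_nonneg_left hFx (Real.rpow_nonneg h1x q)
        _ = M * (1 - x) ^ q := mul_comm _ _
    have hwIco : IntegrableOn (fun x : ℝ => (1 - x) ^ q) (Ico δ 1) := hw_int.mono_set hsub2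
    calc (∫ x in Ico δ 1, f x) ≤ ∫ x in Ico δ 1, M * (1 - x) ^ q := by
          refine setIntegral_mono_on (hf_int.mono_set hsub2) (hwIco.const_mul M)
            measurableSet_Ico hb
      _ = M * ∫ x in Ico δ 1, (1 - x) ^ q := by rw [integral_const_mul]
      _ ≤ M * ∫ x in Ioo (0:ℝ) 1, (1 - x) ^ q := by
          refine mul_le_mul_of_nonneg_left ?_ hM0
          refine setIntegral_mono_set hw_int ?_ (HasSubset.Subset.eventuallyLE hsub2)
          exact (ae_restrict_iff' measurableSet_Ioo).2 (Filter.Eventually.of_forall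
            (fun x hx => Real.rpow_nonneg (by linarith [hx.2]) q))
      _ = M * (1/(q+1)) := by rw [hw_val]
  -- bound M
  have hfacK : Kr ^ (m+1) / ((Nat.factorial (m+1) : ℕ) : ℝ) ≤ Real.exp 1 ^ (m+1) := by
    have hsum := Real.sum_le_exp_of_nonneg (x := Kr) hKr0.le (m+2)
    have hsingle : Kr ^ (m+1) / ((Nat.factorial (m+1) : ℕ) : ℝ)
        ≤ ∑ i ∈ Finset.range (m+2), Kr ^ i / (Nat.factorial i : ℝ) := by
      exact Finset.single_le_sum (f := fun i => Kr ^ i / (Nat.factorial i : ℝ))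
        (fun i _ => by positivity) (Finset.self_mem_range_succ (m+1))
    refine le_trans hsingle (le_trans hsum ?_)
    rw [← Real.exp_nat_mul, mul_one, hKr_def]
  have hMr : M ≤ (2 * lam - 1) / c ^ (m+1) := by
    have h1 : M = (7 / (20 * c)) ^ (m+1) * (Kr ^ (m+1) / ((Nat.factorial (m+1) : ℕ) : ℝ)) := by
      rw [hM_def, hT_def, show (7 : ℝ) * Kr / (20 * c) = (7 / (20 * c)) * Kr by ring, mul_pow]
      ring
    have h2 : M ≤ (7 / (20 * c)) ^ (m+1) * Real.exp 1 ^ (m+1) := by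
      rw [h1]
      exact mul_le_mul_of_nonneg_left hfacK (by positivity)
    have h3 : (7 / (20 * c) : ℝ) ^ (m+1) * Real.exp 1 ^ (m+1) = r ^ (m+1) / c ^ (m+1) := by
      rw [← mul_pow, ← div_pow]
      congr 1
      rw [hr_def]
      field_simp
    rw [h3] at h2
    refine le_trans h2 ?_
    exact div_le_div_of_nonneg_right hrK (by positivity)
  -- conclude
  have hq2 : q + 1 = 2 * lam - 1 := by rw [hq_def]; ring
  have hp2' : (∫ x in Ico δ 1, f x) ≤ 1 / c ^ (m+1) := by
    refine le_trans hp2 ?_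
    rw [hq2]
    calc M * (1 / (2 * lam - 1)) ≤ ((2 * lam - 1) / c ^ (m+1)) * (1 / (2 * lam - 1)) :=
          mul_le_mul_of_nonneg_right hMr (by positivity)
      _ = 1 / c ^ (m+1) := by field_simp
  have hcKpos : (0:ℝ) < c ^ (m+1) := by positivity
  calc (∫ x in Ioo (0:ℝ) 1, f x) = (∫ x in Ioo (0:ℝ) δ, f x) + ∫ x in Ico δ 1, f x := hsplit
    _ ≤ 2 * δ + 1 / c ^ (m+1) := add_le_add hp1 hp2'
    _ ≤ (c ^ (m+1) : ℝ)⁻¹ + 1 / c ^ (m+1) := by linarith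
    _ = 2 / c ^ (m+1) := by rw [inv_eq_one_div]; ring
end
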